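/- arXiv:1809.03649 — 9 statements merged into one kernel-verified Lean document; each statement's English description precedes it below -/
import Mathlib

section
/- Let K be a CM field with maximal totally real subfield F. If α ∈ O_K is a Weil generator for K (i.e., αᾱ ∈ ℤ and ℤ[α, ᾱ] = O_K), then O_F = ℤ[α + ᾱ]. -/
/-- `F` is totally real: every complex embedding has real image. -/
def TotallyReal (F : Type*) [Field F] : Prop :=
  ∀ φ : F →+* ℂ, ∀ x : F, (starRingEnd ℂ) (φ x) = φ x

/-- `K` is totally imaginary: no complex embedding has real image. -/
def TotallyImaginary (K : Type*) [Field K] : Prop :=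
  ∀ φ : K →+* ℂ, ∃ x : K, (starRingEnd ℂ) (φ x) ≠ φ x

/-- `α` is a Weil generator of the CM field `K` with complex conjugation `c`:
`α` is an algebraic integer, `α·ᾱ ∈ ℤ`, and `ℤ[α, ᾱ] = 𝓞 K`. -/
def IsWeilGenerator (K : Type*) [Field K] (c : K ≃+* K) (α : K) : Prop :=
  α ∈ integralClosure ℤ K ∧ (∃ n : ℤ, α * c α = (n : K)) ∧
    Algebra.adjoin ℤ ({α, c α} : Set K) = integralClosure ℤ K

/-- Every element of `ℤ[α, b-α]` can be written as `r + s·α` with `r, s ∈ ℤ[b]`,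
provided `α² = bα - n`. -/
lemma rep_aux {K : Type*} [CommRing K] (b α : K) (n : ℤ)
    (hsq : α * α = b * α - n) {x : K}
    (hx : x ∈ Algebra.adjoin ℤ ({α, b - α} : Set K)) :
    ∃ r s : K, r ∈ Algebra.adjoin ℤ ({b} : Set K) ∧
      s ∈ Algebra.adjoin ℤ ({b} : Set K) ∧ x = r + s * α := by
  have hbmem : b ∈ Algebra.adjoin ℤ ({b} : Set K) :=
    Algebra.subset_adjoin rfl
  induction hx using Algebra.adjoin_induction with
  | mem y hy =>
    rcases hy with rfl | hy
    · exact ⟨0, 1, zero_mem _, one_mem _, by ring⟩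
    · rw [Set.mem_singleton_iff] at hy
      subst hy
      exact ⟨b, -1, hbmem, neg_mem (one_mem _), by ring⟩
  | algebraMap r =>
    exact ⟨algebraMap ℤ K r, 0, Subalgebra.algebraMap_mem _ r, zero_mem _, by ring⟩
  | add x y hx hy ihx ihy =>
    obtain ⟨r, s, hr, hs, rfl⟩ := ihx
    obtain ⟨r', s', hr', hs', rfl⟩ := ihy
    exact ⟨r + r', s + s', add_mem hr hr', add_mem hs hs', by ring⟩
  | mul x y hx hy ihx ihy =>
    obtain ⟨r, s, hr, hs, rfl⟩ := ihx
    obtain ⟨r', s', hr', hs', rfl⟩ := ihy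
    refine ⟨r * r' - (n : K) * (s * s'), r * s' + s * r' + b * (s * s'), ?_, ?_, ?_⟩
    · exact sub_mem (mul_mem hr hr')
        (mul_mem (Subalgebra.algebraMap_mem _ n) (mul_mem hs hs'))
    · exact add_mem (add_mem (mul_mem hr hs') (mul_mem hs hr'))
        (mul_mem hbmem (mul_mem hs hs'))
    · linear_combination s * s' * hsq

/-- A ring equivalence fixing `b` fixes all of `ℤ[b]`. -/
lemma fix_aux {K : Type*} [CommRing K] (c : K ≃+* K) (b : K) (hcb : c b = b)
    {x : K} (hx : x ∈ Algebra.adjoin ℤ ({b} : Set K)) : c x = x := by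
  induction hx using Algebra.adjoin_induction with
  | mem y hy => rw [Set.mem_singleton_iff] at hy; subst hy; exact hcb
  | algebraMap r => simp
  | add x y hx hy ihx ihy => rw [map_add, ihx, ihy]
  | mul x y hx hy ihx ihy => rw [map_mul, ihx, ihy]

/-- Let `K` be a CM field with maximal totally real subfield `F`
(the fixed field of complex conjugation `c`).  If `α ∈ 𝓞 K` is a Weil generator for
`K`, then `𝓞 F = ℤ[α + ᾱ]`. -/
theorem stmt3 (F K : Type*) [Field F] [Field K] [NumberField F] [NumberField K]
    [Algebra F K] (hF : TotallyReal F) (hK : TotallyImaginary K)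
    (h2 : Module.finrank F K = 2) (c : K ≃ₐ[F] K)
    (hc : ∀ φ : K →+* ℂ, ∀ x : K, φ (c x) = (starRingEnd ℂ) (φ x))
    (hfix : ∀ x : K, c x = x ↔ x ∈ (algebraMap F K).range)
    (α : K) (hW : IsWeilGenerator K c.toRingEquiv α)
    (β : F) (hβ : algebraMap F K β = α + c α) :
    Algebra.adjoin ℤ ({β} : Set F) = integralClosure ℤ F := by
  obtain ⟨hint, ⟨n, hn⟩, hadj⟩ := hW
  have hintK : IsIntegral ℤ α := hint
  have hinj : Function.Injective (algebraMap F K) := (algebraMap F K).injective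
  set b : K := α + c α with hb
  have hcb : c b = b := by rw [← hβ]; exact c.commutes β
  have hca : (c.toRingEquiv) α = b - α := by simp [hb]
  -- `c α` is integral
  have hintca : IsIntegral ℤ (c α) :=
    IsIntegral.map ((c : K →+* K).toIntAlgHom) hintK
  -- α ≠ c α
  have hane : α ≠ c α := by
    intro heq
    -- then c fixes all of O_K, hence all of K, contradicting finrank = 2
    have hfixO : ∀ x : K, IsIntegral ℤ x → c x = x := by
      intro x hx
      have hx' : x ∈ Algebra.adjoin ℤ ({α, c.toRingEquiv α} : Set K) := hadj ▸ hx
      have hset : ({α, c.toRingEquiv α} : Set K) = {α} := by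
        have : c.toRingEquiv α = α := (heq).symm
        rw [this]; simp
      rw [hset] at hx'
      exact fix_aux c.toRingEquiv α heq.symm hx'
    have hall : ∀ y : K, c y = y := by
      intro y
      have halg : IsAlgebraic ℤ y := by
        have : IsAlgebraic ℚ y := (Algebra.IsAlgebraic.isAlgebraic y)
        exact (IsFractionRing.isAlgebraic_iff ℤ ℚ K).mpr this
      obtain ⟨w, m, hm0, hmw⟩ : ∃ w : integralClosure ℤ K, ∃ m ≠ (0 : ℤ),
          algebraMap ℤ K m * y = w := by
        obtain ⟨m, hm0, hmi⟩ := halg.exists_integral_multiple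
        exact ⟨⟨m • y, hmi⟩, m, hm0, by simp [zsmul_eq_mul]⟩
      have hw : c (w : K) = w := hfixO _ w.2
      have hmC : ((m : K)) * y = w := by simpa using hmw
      have : c ((m : K) * y) = (m : K) * y := by rw [hmC]; exact hw
      rw [map_mul, map_intCast] at this
      have hmne : ((m : K)) ≠ 0 := (Int.cast_ne_zero (α := K)).mpr hm0
      exact mul_left_cancel₀ hmne this
    have hbot : (⊥ : Subalgebra F K) = ⊤ := by
      rw [eq_top_iff]
      intro x _
      rw [Algebra.mem_bot]
      exact (hfix x).mp (hall x)
    have : Module.finrank F K = 1 := Subalgebra.bot_eq_top_iff_finrank_eq_one.mp hbot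
    omega
  -- forward inclusion
  refine le_antisymm ?_ ?_
  · rw [Algebra.adjoin_le_iff, Set.singleton_subset_iff]
    show IsIntegral ℤ β
    rw [← isIntegral_algebraMap_iff hinj, hβ]
    exact hintK.add hintca
  · intro x hx
    have hxF : IsIntegral ℤ x := hx
    have hy : IsIntegral ℤ (algebraMap F K x) := hxF.map (IsScalarTower.toAlgHom ℤ F K)
    have hy' : algebraMap F K x ∈ Algebra.adjoin ℤ ({α, c.toRingEquiv α} : Set K) :=
      hadj ▸ hy
    rw [hca] at hy'
    have hsq : α * α = b * α - (n : K) := by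
      have hn' : α * c.toRingEquiv α = (n : K) := hn
      rw [hca] at hn'
      linear_combination -hn'
    obtain ⟨r, s, hr, hs, heq⟩ := rep_aux b α n hsq hy'
    have hcy : c (algebraMap F K x) = algebraMap F K x := c.commutes x
    have hcr : c r = r := fix_aux c.toRingEquiv b hcb hr
    have hcs : c s = s := fix_aux c.toRingEquiv b hcb hs
    have heq2 : algebraMap F K x = r + s * (b - α) := by
      calc algebraMap F K x = c (algebraMap F K x) := hcy.symm
        _ = c r + c s * c α := by rw [heq, map_add, map_mul]
        _ = r + s * (b - α) := by rw [hcr, hcs]; congr 1; rw [hb]; ring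
    have hs0 : s = 0 := by
      have : s * (α - c α) = 0 := by
        have := heq.symm.trans heq2
        rw [hb] at this
        linear_combination this
      rcases mul_eq_zero.mp this with h | h
      · exact h
      · exact absurd (sub_eq_zero.mp h) hane
    rw [hs0, zero_mul, add_zero] at heq
    -- now algebraMap F K x = r ∈ ℤ[b] = image of ℤ[β]
    have hmap : Algebra.adjoin ℤ ({b} : Set K) =
        (Algebra.adjoin ℤ ({β} : Set F)).map (IsScalarTower.toAlgHom ℤ F K) := by
      rw [AlgHom.map_adjoin, Set.image_singleton]
      congr 1
      rw [Set.singleton_eq_singleton_iff]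
      exact hβ.symm
    rw [hmap] at hr
    obtain ⟨x', hx', hxx'⟩ := hr
    have : x' = x := hinj (by rw [heq]; exact hxx')
    rwa [← this]
end

section
/- Let K be a CM field with maximal totally real subfield F. An element α ∈ O_K is a Weil generator for K if and only if: (1) αᾱ ∈ ℤ, (2) ℤ[α + ᾱ] = O_F, and (3) the principal ideal generated by α - ᾱ in O_K equals the relative different ideal Diff_{K/F}. -/
open NumberField

section Aux

open Polynomial nonZeroDivisors IntermediateField

variable {F K : Type*} [Field F] [Field K] [NumberField F] [NumberField K]
    [Algebra F K]

/-- Structure lemma: elements of `ℤ[a, ā]` have the form `p + q·a` with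
`p, q ∈ ℤ[a + ā]`, provided `a·ā ∈ ℤ`. -/
lemma aux_form {K : Type*} [Field K] {a b : K} {n : ℤ} (hn : a * b = (n : K))
    {x : K} (hx : x ∈ Algebra.adjoin ℤ ({a, b} : Set K)) :
    ∃ p ∈ Algebra.adjoin ℤ ({a + b} : Set K), ∃ q ∈ Algebra.adjoin ℤ ({a + b} : Set K),
      x = p + q * a := by
  set R := Algebra.adjoin ℤ ({a + b} : Set K) with hR
  have hs : a + b ∈ R := Algebra.subset_adjoin rfl
  induction hx using Algebra.adjoin_induction with
  | mem x h =>
    rcases h with h | h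
    · exact ⟨0, zero_mem R, 1, one_mem R, by simp [h]⟩
    · refine ⟨a + b, hs, -1, neg_mem (one_mem R), ?_⟩
      simp only [Set.mem_singleton_iff] at h
      rw [h]; ring
  | algebraMap r => exact ⟨algebraMap ℤ K r, algebraMap_mem R r, 0, zero_mem R, by ring⟩
  | add x y hx hy ihx ihy =>
    obtain ⟨p, hp, q, hq, rfl⟩ := ihx
    obtain ⟨p', hp', q', hq', rfl⟩ := ihy
    exact ⟨p + p', add_mem hp hp', q + q', add_mem hq hq', by ring⟩
  | mul x y hx hy ihx ihy =>
    obtain ⟨p, hp, q, hq, rfl⟩ := ihx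
    obtain ⟨p', hp', q', hq', rfl⟩ := ihy
    have hnR : (n : K) ∈ R := by
      have := algebraMap_mem R n; simpa using this
    refine ⟨p * p' - q * q' * (n : K),
      sub_mem (mul_mem hp hp') (mul_mem (mul_mem hq hq') hnR),
      p * q' + p' * q + q * q' * (a + b),
      add_mem (add_mem (mul_mem hp hq') (mul_mem hp' hq)) (mul_mem (mul_mem hq hq') hs), ?_⟩
    have ha2 : a * a = (a + b) * a - (n : K) := by rw [← hn]; ring
    linear_combination q * q' * ha2

end Aux

open Polynomial nonZeroDivisors IntermediateField in
/-- Let `K` be a CM field with maximal totally real subfield `F` and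
complex conjugation `c`.  An algebraic integer `α ∈ 𝓞 K` is a Weil generator for `K`
if and only if (1) `α·ᾱ ∈ ℤ`, (2) `ℤ[α + ᾱ] = 𝓞 F` (viewed inside `K`), and
(3) the principal ideal of `𝓞 K` generated by `α - ᾱ` equals the relative different
ideal `Diff_{K/F}`. -/
theorem stmt4 (F K : Type*) [Field F] [Field K] [NumberField F] [NumberField K]
    [Algebra F K] (hF : TotallyReal F) (hK : TotallyImaginary K)
    (h2 : Module.finrank F K = 2) (c : K ≃ₐ[F] K)
    (hc : ∀ φ : K →+* ℂ, ∀ x : K, φ (c x) = (starRingEnd ℂ) (φ x))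
    (hfix : ∀ x : K, c x = x ↔ x ∈ (algebraMap F K).range)
    (α : 𝓞 K) :
    IsWeilGenerator K c.toRingEquiv (algebraMap (𝓞 K) K α) ↔
      ((∃ n : ℤ, (algebraMap (𝓞 K) K α) * c (algebraMap (𝓞 K) K α) = (n : K)) ∧
        Algebra.adjoin ℤ
            ({algebraMap (𝓞 K) K α + c (algebraMap (𝓞 K) K α)} : Set K) =
          Subalgebra.map (IsScalarTower.toAlgHom ℤ F K) (integralClosure ℤ F) ∧
        ∀ d : 𝓞 K,
          algebraMap (𝓞 K) K d =
              algebraMap (𝓞 K) K α - c (algebraMap (𝓞 K) K α) →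
            Ideal.span {d} = differentIdeal (𝓞 F) (𝓞 K)) := by
  classical
  set a : K := algebraMap (𝓞 K) K α with ha_def
  -- complex conjugation is an involution
  obtain ⟨φ⟩ : Nonempty (K →+* ℂ) := inferInstance
  have hcc : ∀ x : K, c (c x) = x := by
    intro x
    apply φ.injective
    rw [hc φ, hc φ, Complex.conj_conj]
  -- basic integrality
  have hint : IsIntegral ℤ a := α.isIntegral_coe
  have hcint : ∀ x : K, IsIntegral ℤ x → IsIntegral ℤ (c x) := by
    intro x hx
    exact IsIntegral.map (c.toRingEquiv.toRingHom.toIntAlgHom) hx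
  have hca : IsIntegral ℤ (c a) := hcint a hint
  -- the trace s = a + c a lies in F
  have hs_fixed : c (a + c a) = a + c a := by rw [map_add, hcc]; ring
  obtain ⟨s₀, hs₀⟩ : ∃ y : F, algebraMap F K y = a + c a := (hfix _).1 hs_fixed
  have hsint : IsIntegral ℤ (a + c a) := hint.add hca
  have hs₀int : IsIntegral ℤ s₀ := by
    rwa [← isIntegral_algebraMap_iff (algebraMap F K).injective, hs₀]
  -- elements of ℤ[a + c a] are fixed by c
  have hfixZs : ∀ x ∈ Algebra.adjoin ℤ ({a + c a} : Set K), c x = x := by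
    intro x hx
    induction hx using Algebra.adjoin_induction with
    | mem x h => simp only [Set.mem_singleton_iff] at h; rw [h]; exact hs_fixed
    | algebraMap r => simp [algebraMap_int_eq, map_intCast]
    | add x y hx hy ihx ihy => rw [map_add, ihx, ihy]
    | mul x y hx hy ihx ihy => rw [map_mul, ihx, ihy]
  -- main auxiliary: under a ≠ c a, the minimal polynomial facts
  have main : ∀ n : ℤ, a * c a = (n : K) → a ≠ c a →
      Algebra.adjoin F ({a} : Set K) = ⊤ ∧
        algebraMap (𝓞 K) K (aeval α (derivative (minpoly (𝓞 F) α))) = a - c a := by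
    intro n hn hane
    have haF : a ∉ (algebraMap F K).range := fun h => hane ((hfix a).2 h).symm
    have hintF : IsIntegral F a := IsIntegral.of_finite F a
    -- finrank F F⟮a⟯ = 2
    have hne1 : Module.finrank F F⟮a⟯ ≠ 1 := by
      intro h1
      have hbot : F⟮a⟯ = ⊥ := IntermediateField.finrank_eq_one_iff.mp h1
      apply haF
      have : a ∈ F⟮a⟯ := IntermediateField.mem_adjoin_simple_self F a
      rw [hbot, IntermediateField.mem_bot] at this
      obtain ⟨y, hy⟩ := this
      exact ⟨y, hy⟩
    have hmul : Module.finrank F F⟮a⟯ * Module.finrank F⟮a⟯ K = 2 := by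
      rw [Module.finrank_mul_finrank, h2]
    have hfr2 : Module.finrank F F⟮a⟯ = 2 := by
      have hdvd : Module.finrank F F⟮a⟯ ∣ 2 := ⟨_, hmul.symm⟩
      rcases (Nat.dvd_prime Nat.prime_two).1 hdvd with h | h
      · exact absurd h hne1
      · exact h
    have hEtop : F⟮a⟯ = ⊤ := by
      apply IntermediateField.eq_of_le_of_finrank_eq le_top
      rw [hfr2, IntermediateField.finrank_top', h2]
    have hT : Algebra.adjoin F ({a} : Set K) = ⊤ := by
      rw [← IntermediateField.adjoin_simple_toSubalgebra_of_isAlgebraic hintF.isAlgebraic, hEtop]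
      rfl
    refine ⟨hT, ?_⟩
    -- the minimal polynomial of a over F
    have hdeg : (minpoly F a).natDegree = 2 := by
      rw [← IntermediateField.adjoin.finrank hintF, hEtop, IntermediateField.finrank_top', h2]
    set Q : F[X] := X ^ 2 + C (-s₀) * X + C ((n : F)) with hQdef
    have hQmonic : Q.Monic := by
      have h1 : (C (-s₀) * X + C ((n : F))).degree < (X ^ 2 : F[X]).degree := by
        refine lt_of_le_of_lt (Polynomial.degree_linear_le) ?_
        rw [Polynomial.degree_X_pow]
        norm_num
      simpa [hQdef, add_assoc] using (Polynomial.monic_X_pow 2).add_of_left h1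
    have hQa : aeval a Q = 0 := by
      simp only [hQdef, map_add, map_mul, map_pow, aeval_X, aeval_C]
      have hnm : (algebraMap F K) ((n : F)) = (n : K) := by push_cast [map_intCast]; rfl
      rw [map_neg, hs₀, hnm, ← hn]
      ring
    have hQdeg : Q.natDegree = 2 := by
      rw [hQdef]
      compute_degree!
    have hQmin : minpoly F a = Q := by
      obtain ⟨r, hr⟩ := minpoly.dvd F a hQa
      have hQne : Q ≠ 0 := hQmonic.ne_zero
      have hrne : r ≠ 0 := fun h => hQne (by rw [hr, h, mul_zero])
      have hmne : minpoly F a ≠ 0 := minpoly.ne_zero hintF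
      have hdegr : r.natDegree = 0 := by
        have := Polynomial.natDegree_mul hmne hrne
        rw [← hr, hQdeg, hdeg] at this
        omega
      have hlc : r.leadingCoeff = 1 := by
        have := congrArg Polynomial.leadingCoeff hr
        rw [Polynomial.leadingCoeff_mul, hQmonic.leadingCoeff,
          (minpoly.monic hintF).leadingCoeff, one_mul] at this
        exact this.symm
      have : r = 1 := Polynomial.eq_one_of_monic_natDegree_zero hlc hdegr
      rw [hr, this, mul_one]
    -- transfer to 𝓞 F
    have hαint : IsIntegral (𝓞 F) α := Algebra.IsIntegral.isIntegral α
    have hmp : minpoly F a = (minpoly (𝓞 F) α).map (algebraMap (𝓞 F) F) :=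
      minpoly.isIntegrallyClosed_eq_field_fractions F K hαint
    calc algebraMap (𝓞 K) K (aeval α (derivative (minpoly (𝓞 F) α)))
        = aeval a (derivative (minpoly (𝓞 F) α)) := (aeval_algebraMap_apply K α _).symm
      _ = aeval a ((derivative (minpoly (𝓞 F) α)).map (algebraMap (𝓞 F) F)) :=
          (aeval_map_algebraMap (R := 𝓞 F) (A := F) (B := K) a _).symm
      _ = aeval a (derivative ((minpoly (𝓞 F) α).map (algebraMap (𝓞 F) F))) := by
          rw [derivative_map]
      _ = aeval a (derivative (minpoly F a)) := by rw [← hmp]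
      _ = a - c a := by
          rw [hQmin, hQdef]
          have hder : derivative (X ^ 2 + C (-s₀) * X + C ((n : F))) = C 2 * X + C (-s₀) := by
            simp [derivative_X_pow]
            rw [one_add_one_eq_two, map_ofNat]
          rw [hder]
          simp only [map_add, map_mul, aeval_X, aeval_C, map_neg, map_ofNat]
          rw [hs₀]
          ring
  -- injectivity of 𝓞 K → K
  have hOK_inj : Function.Injective (algebraMap (𝓞 K) K) := RingOfIntegers.coe_injective
  -- the relative different ideal is nonzero
  have hDne : differentIdeal (𝓞 F) (𝓞 K) ≠ ⊥ := by
    intro h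
    have h1 := coeIdeal_differentIdeal (𝓞 F) F K (𝓞 K)
    rw [h, FractionalIdeal.coeIdeal_bot] at h1
    have hd : FractionalIdeal.dual (𝓞 F) F (1 : FractionalIdeal (𝓞 K)⁰ K) ≠ 0 :=
      FractionalIdeal.dual_ne_zero (𝓞 F) F one_ne_zero
    have h2' := mul_inv_cancel₀ hd
    rw [← h1, mul_zero] at h2'
    exact zero_ne_one h2'
  -- mapping adjoin over 𝓞 F from 𝓞 K to K
  have hmapadj : (Algebra.adjoin (𝓞 F) ({α} : Set (𝓞 K))).map
      (IsScalarTower.toAlgHom (𝓞 F) (𝓞 K) K) = Algebra.adjoin (𝓞 F) ({a} : Set K) := by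
    rw [AlgHom.map_adjoin, Set.image_singleton]
    rfl
  -- adjoin ℤ {a + c a} ≤ adjoin ℤ {a, c a}
  have hle2 : Algebra.adjoin ℤ ({a + c a} : Set K) ≤ Algebra.adjoin ℤ ({a, c a} : Set K) := by
    apply Algebra.adjoin_le
    intro w hw
    simp only [Set.mem_singleton_iff] at hw
    subst hw
    exact add_mem (Algebra.subset_adjoin (Or.inl rfl))
      (Algebra.subset_adjoin (Or.inr rfl))
  constructor
  · rintro ⟨-, ⟨n, hn'⟩, hadj'⟩
    have hn : a * c a = (n : K) := hn'
    have hadj : Algebra.adjoin ℤ ({a, c a} : Set K) = integralClosure ℤ K := hadj'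
    have hane : a ≠ c a := by
      intro h
      have haR : a ∈ (algebraMap F K).range := (hfix a).1 h.symm
      have hsub : integralClosure ℤ K ≤ (IsScalarTower.toAlgHom ℤ F K).range := by
        rw [← hadj]
        apply Algebra.adjoin_le
        intro x hx
        rcases hx with rfl | hx
        · obtain ⟨y, hy⟩ := haR; exact ⟨y, hy⟩
        · simp only [Set.mem_singleton_iff] at hx
          subst hx
          rw [← h]
          obtain ⟨y, hy⟩ := haR; exact ⟨y, hy⟩
      have hbot : (⊥ : Subalgebra F K) = ⊤ := by
        rw [eq_top_iff]
        intro x _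
        rw [Algebra.mem_bot]
        obtain ⟨r, s, -, rfl⟩ := IsFractionRing.div_surjective (A := 𝓞 K)
          (K := K) x
        obtain ⟨pr, hpr⟩ := hsub r.2
        obtain ⟨ps, hps⟩ := hsub s.2
        refine ⟨pr / ps, ?_⟩
        rw [map_div₀]
        exact congrArg₂ (· / ·) hpr hps
      have hfr := Subalgebra.bot_eq_top_iff_finrank_eq_one.mp hbot
      rw [h2] at hfr
      omega
    obtain ⟨hT, himg⟩ := main n hn hane
    refine ⟨⟨n, hn⟩, ?_, ?_⟩
    · -- condition (2)
      apply le_antisymm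
      · apply Algebra.adjoin_le
        intro x hx
        simp only [Set.mem_singleton_iff] at hx
        subst hx
        exact Subalgebra.mem_map.mpr ⟨s₀, hs₀int, hs₀⟩
      · intro x hx
        obtain ⟨y, hy, rfl⟩ := Subalgebra.mem_map.mp hx
        have hxint : (IsScalarTower.toAlgHom ℤ F K) y ∈ integralClosure ℤ K :=
          IsIntegral.map (IsScalarTower.toAlgHom ℤ F K) hy
        rw [← hadj] at hxint
        obtain ⟨p, hp, q, hq, hxe⟩ := aux_form hn hxint
        have hfx : c ((IsScalarTower.toAlgHom ℤ F K) y) = (IsScalarTower.toAlgHom ℤ F K) y :=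
          (hfix _).2 ⟨y, rfl⟩
        have heq : (IsScalarTower.toAlgHom ℤ F K) y = p + q * c a := by
          conv_lhs => rw [← hfx]
          rw [hxe, map_add, map_mul, hfixZs p hp, hfixZs q hq]
        have hq0 : q = 0 := by
          have h0 : q * (a - c a) = 0 := by linear_combination heq - hxe
          rcases mul_eq_zero.mp h0 with h' | h'
          · exact h'
          · exact absurd (sub_eq_zero.mp h') hane
        rw [hxe, hq0, zero_mul, add_zero]
        exact hp
    · -- condition (3)
      intro d hd
      have hOFtop : Algebra.adjoin (𝓞 F) ({α} : Set (𝓞 K)) = ⊤ := by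
        rw [eq_top_iff]
        intro b _
        have hbint : algebraMap (𝓞 K) K b ∈ integralClosure ℤ K := b.2
        rw [← hadj] at hbint
        obtain ⟨p, hp, q, hq, hbe⟩ := aux_form hn hbint
        have hsmem : ∀ z ∈ Algebra.adjoin ℤ ({a + c a} : Set K),
            z ∈ Algebra.adjoin (𝓞 F) ({a} : Set K) := by
          intro z hz
          have hle : Algebra.adjoin ℤ ({a + c a} : Set K) ≤
              (Algebra.adjoin (𝓞 F) ({a} : Set K)).restrictScalars ℤ := by
            apply Algebra.adjoin_le
            intro w hw
            simp only [Set.mem_singleton_iff] at hw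
            subst hw
            show a + c a ∈ Algebra.adjoin (𝓞 F) ({a} : Set K)
            have hsmap : algebraMap (𝓞 F) K (⟨s₀, hs₀int⟩ : 𝓞 F) = a + c a := hs₀
            rw [← hsmap]
            exact Subalgebra.algebraMap_mem _ _
          exact hle hz
        have hbK : (algebraMap (𝓞 K) K) b ∈ Algebra.adjoin (𝓞 F) ({a} : Set K) := by
          rw [hbe]
          exact add_mem (hsmem p hp) (mul_mem (hsmem q hq) (Algebra.subset_adjoin rfl))
        rw [← hmapadj] at hbK
        obtain ⟨b', hb', hbe'⟩ := hbK
        have hbb : b' = b := hOK_inj hbe'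
        rwa [← hbb]
      have hcond : conductor (𝓞 F) α = ⊤ := conductor_eq_top_of_adjoin_eq_top hOFtop
      have key := conductor_mul_differentIdeal (𝓞 F) F K α hT
      rw [hcond, Ideal.top_mul] at key
      have hdg : d = aeval α (derivative (minpoly (𝓞 F) α)) := hOK_inj (by rw [hd, himg])
      rw [hdg, key]
  · rintro ⟨⟨n, hn⟩, hZs, hDiff⟩
    have hane : a ≠ c a := by
      intro h
      have h0 : algebraMap (𝓞 K) K (0 : 𝓞 K) = a - c a := by
        rw [map_zero, ← h, sub_self]
      have hsp := hDiff 0 h0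
      rw [Ideal.span_singleton_eq_bot.mpr rfl] at hsp
      exact hDne hsp.symm
    obtain ⟨hT, himg⟩ := main n hn hane
    have hd₀mem : a - c a ∈ integralClosure ℤ K := hint.sub hca
    have hspan : Ideal.span {(⟨a - c a, hd₀mem⟩ : 𝓞 K)} = differentIdeal (𝓞 F) (𝓞 K) :=
      hDiff ⟨a - c a, hd₀mem⟩ rfl
    have hg : aeval α (derivative (minpoly (𝓞 F) α)) = (⟨a - c a, hd₀mem⟩ : 𝓞 K) :=
      hOK_inj (by rw [himg]; rfl)
    have key := conductor_mul_differentIdeal (𝓞 F) F K α hT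
    replace key := key.trans ((congrArg (fun x : 𝓞 K => Ideal.span {x}) hg).trans hspan)
    have hD0 : differentIdeal (𝓞 F) (𝓞 K) ≠ 0 := hDne
    have hcond : conductor (𝓞 F) α = ⊤ := by
      have heq : conductor (𝓞 F) α * differentIdeal (𝓞 F) (𝓞 K) =
          ⊤ * differentIdeal (𝓞 F) (𝓞 K) := by
        rw [key, Ideal.top_mul]
      exact mul_right_cancel₀ hD0 heq
    have hOFtop : Algebra.adjoin (𝓞 F) ({α} : Set (𝓞 K)) = ⊤ := by
      rw [eq_top_iff]
      intro b _
      have h1 : (1 : 𝓞 K) ∈ conductor (𝓞 F) α := by rw [hcond]; trivial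
      have hb := mem_conductor_iff.mp h1 b
      simpa using hb
    refine ⟨α.2, ⟨n, hn⟩, ?_⟩
    apply le_antisymm
    · apply Algebra.adjoin_le
      intro x hx
      rcases hx with rfl | hx
      · exact hint
      · simp only [Set.mem_singleton_iff] at hx
        subst hx
        exact hca
    · intro x hx
      have hbmem : (⟨x, hx⟩ : 𝓞 K) ∈ Algebra.adjoin (𝓞 F) ({α} : Set (𝓞 K)) := by
        rw [hOFtop]; trivial
      have hbK : x ∈ Algebra.adjoin (𝓞 F) ({a} : Set K) := by
        rw [← hmapadj]
        exact ⟨⟨x, hx⟩, hbmem, rfl⟩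
      clear hbmem hx
      induction hbK using Algebra.adjoin_induction with
      | mem w hw =>
        simp only [Set.mem_singleton_iff] at hw
        subst hw
        exact Algebra.subset_adjoin (Or.inl rfl)
      | algebraMap r =>
        have hmem : algebraMap (𝓞 F) K r ∈
            Subalgebra.map (IsScalarTower.toAlgHom ℤ F K) (integralClosure ℤ F) :=
          Subalgebra.mem_map.mpr ⟨(r : F), r.2, rfl⟩
        rw [← hZs] at hmem
        exact hle2 hmem
      | add x y hx hy ihx ihy => exact add_mem ihx ihy
      | mul x y hx hy ihx ihy => exact mul_mem ihx ihy
end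

section
/- Let K = ℚ(√15, √(-2)) with maximal totally real subfield F = ℚ(√15). There is no α ∈ O_K with O_K = O_F[α]. (Key facts: Diff_{K/F} = (2), and every unit of O_K lies in F, so α - ᾱ = 2u forces the contradiction that a conjugation-antiinvariant element is fixed by conjugation.) -/
open NumberField

section IntArith

private lemma sq_emod (x n : ℤ) : x^2 % n = (x%n)^2 % n :=
  (Int.ModEq.pow 2 (Int.emod_emod_of_dvd x dvd_rfl)).symm

private lemma sq_emod2 (x : ℤ) : x^2 % 2 = x % 2 := by
  have h := sq_emod x 2
  have h2 : x % 2 = 0 ∨ x % 2 = 1 := by omega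
  rcases h2 with h2 | h2 <;> rw [h, h2] <;> norm_num

private lemma sq_emod4 (x : ℤ) : x^2 % 4 = 0 ∨ x^2 % 4 = 1 := by
  have h := sq_emod x 4
  have h2 : x % 4 = 0 ∨ x % 4 = 1 ∨ x % 4 = 2 ∨ x % 4 = 3 := by omega
  rcases h2 with h2 | h2 | h2 | h2 <;> rw [h, h2] <;> norm_num

private lemma even_sq_emod4 (x : ℤ) (hx : x % 2 = 0) : x^2 % 4 = 0 := by
  have h := sq_emod x 4
  have h2 : x % 4 = 0 ∨ x % 4 = 2 := by omega
  rcases h2 with h2 | h2 <;> rw [h, h2] <;> norm_num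

private lemma odd_sq_emod8 (x : ℤ) (hx : x % 2 = 1) : x^2 % 8 = 1 := by
  have h := sq_emod x 8
  have h2 : x % 8 = 1 ∨ x % 8 = 3 ∨ x % 8 = 5 ∨ x % 8 = 7 := by omega
  rcases h2 with h2 | h2 | h2 | h2 <;> rw [h, h2] <;> norm_num

private lemma sq_emod5 (x : ℤ) : x^2 % 5 = 0 ∨ x^2 % 5 = 1 ∨ x^2 % 5 = 4 := by
  have h := sq_emod x 5
  have h2 : x % 5 = 0 ∨ x % 5 = 1 ∨ x % 5 = 2 ∨ x % 5 = 3 ∨ x % 5 = 4 := by omega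
  rcases h2 with h2 | h2 | h2 | h2 | h2 <;> rw [h, h2] <;> norm_num

private lemma parA (x y c : ℤ) (h : x^2 + 15*y^2 = 2*c) : x % 2 = y % 2 := by
  have hx := sq_emod2 x
  have hy := sq_emod2 y
  obtain ⟨X, hX⟩ : ∃ z, x^2 = z := ⟨_, rfl⟩
  obtain ⟨Y, hY⟩ : ∃ z, y^2 = z := ⟨_, rfl⟩
  rw [hX] at hx h; rw [hY] at hy h
  omega

private lemma parB (B0 B1 x y V0 : ℤ) (hB : B0 % 2 = 0 ∨ B1 % 2 = 0)
    (e : B0^2 + 15*B1^2 + 2*x^2 + 30*y^2 = 4*V0) : x % 2 = y % 2 := by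
  have hx := sq_emod2 x
  have hy := sq_emod2 y
  have q0 := sq_emod4 B0
  have q1 := sq_emod4 B1
  have q0' := even_sq_emod4 B0
  have q1' := even_sq_emod4 B1
  obtain ⟨X, hX⟩ : ∃ z, x^2 = z := ⟨_, rfl⟩
  obtain ⟨Y, hY⟩ : ∃ z, y^2 = z := ⟨_, rfl⟩
  obtain ⟨P, hP⟩ : ∃ z, B0^2 = z := ⟨_, rfl⟩
  obtain ⟨Q, hQ⟩ : ∃ z, B1^2 = z := ⟨_, rfl⟩
  rw [hX] at hx e; rw [hY] at hy e; rw [hP] at q0 q0' e; rw [hQ] at q1 q1' e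
  rcases hB with h | h
  · have := q0' h; omega
  · have := q1' h; omega

private lemma mod8odd (x y : ℤ) (hx : x % 2 = 1) (hy : y % 2 = 1) :
    (x^2 - 15*y^2) % 8 = 2 := by
  have q0 := odd_sq_emod8 x hx
  have q1 := odd_sq_emod8 y hy
  obtain ⟨X, hX⟩ : ∃ z, x^2 = z := ⟨_, rfl⟩
  obtain ⟨Y, hY⟩ : ∃ z, y^2 = z := ⟨_, rfl⟩
  rw [hX] at q0 ⊢; rw [hY] at q1 ⊢
  omega

private lemma mod4even (x y : ℤ) (hx : x % 2 = 0) (hy : y % 2 = 0) :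
    (x^2 - 15*y^2) % 4 = 0 := by
  have q0 := even_sq_emod4 x hx
  have q1 := even_sq_emod4 y hy
  obtain ⟨X, hX⟩ : ∃ z, x^2 = z := ⟨_, rfl⟩
  obtain ⟨Y, hY⟩ : ∃ z, y^2 = z := ⟨_, rfl⟩
  rw [hX] at q0 ⊢; rw [hY] at q1 ⊢
  omega

private lemma nomod5 (x y : ℤ) : x^2 - 15*y^2 ≠ 2 := by
  intro h
  have q := sq_emod5 x
  obtain ⟨X, hX⟩ : ∃ z, x^2 = z := ⟨_, rfl⟩
  rw [hX] at q h
  omega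

/-- Core integer contradiction. -/
private lemma keyZ (W0 W1 B0 B1 V0 V1 h0 h1 k0 k1 : ℤ)
    (i1 : h0*W0 + 15*(h1*W1) = 4) (i2 : h0*W1 + h1*W0 = 0)
    (j1 : k0*W0 + 15*(k1*W1) = 2) (j2 : k0*W1 + k1*W0 = 2)
    (e5 : 2*B0^2 + 30*B1^2 + W0^2 + 15*W1^2 = 8*V0)
    (e6 : 2*(B0*B1) + W0*W1 = 4*V1) : False := by
  have E1 : (W0^2 - 15*W1^2) * (h0^2 - 15*h1^2) = 16 := by
    linear_combination (h0*W0 + 15*(h1*W1) + 4) * i1 - 15*(h0*W1 + h1*W0) * i2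
  have E4 : k1*(W0^2 - 15*W1^2) = 2*W0 - 2*W1 := by
    linear_combination W0 * j2 - W1 * j1
  have hpar : W0 % 2 = W1 % 2 :=
    parA W0 W1 (4*V0 - B0^2 - 15*B1^2) (by linear_combination e5)
  rcases Int.even_or_odd W0 with hW0 | hW0
  · -- W0, W1 even
    have hW0' : W0 % 2 = 0 := Int.even_iff.mp hW0
    obtain ⟨a, rfl⟩ : ∃ a, W0 = 2*a := ⟨W0/2, by omega⟩
    obtain ⟨b, rfl⟩ : ∃ b, W1 = 2*b := ⟨W1/2, by omega⟩
    have hm : (a^2 - 15*b^2) * (h0^2 - 15*h1^2) = 4 := by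
      refine mul_left_cancel₀ (show (4:ℤ) ≠ 0 by norm_num) ?_
      linear_combination E1
    have hk : k1*(a^2 - 15*b^2) = a - b := by
      refine mul_left_cancel₀ (show (4:ℤ) ≠ 0 by norm_num) ?_
      linear_combination E4
    have hBB : Even (B0*B1) := by
      have h2 : (2:ℤ)*(B0*B1) = 2*(2*V1 - 2*(a*b)) := by linear_combination e6
      have h3 := mul_left_cancel₀ (show (2:ℤ) ≠ 0 by norm_num) h2
      exact ⟨V1 - a*b, by linear_combination h3⟩
    have hBor : B0 % 2 = 0 ∨ B1 % 2 = 0 := by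
      rcases Int.even_mul.mp hBB with h | h
      · exact Or.inl (Int.even_iff.mp h)
      · exact Or.inr (Int.even_iff.mp h)
    have hab : a % 2 = b % 2 := by
      refine parB B0 B1 a b V0 hBor ?_
      refine mul_left_cancel₀ (show (2:ℤ) ≠ 0 by norm_num) ?_
      linear_combination e5
    rcases Int.even_or_odd a with ha | ha
    · -- a, b even : descend again
      have ha' : a % 2 = 0 := Int.even_iff.mp ha
      obtain ⟨a', rfl⟩ : ∃ z, a = 2*z := ⟨a/2, by omega⟩
      obtain ⟨b', rfl⟩ : ∃ z, b = 2*z := ⟨b/2, by omega⟩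
      have hm' : (a'^2 - 15*b'^2) * (h0^2 - 15*h1^2) = 1 := by
        refine mul_left_cancel₀ (show (4:ℤ) ≠ 0 by norm_num) ?_
        linear_combination hm
      have hk' : 2*(k1*(a'^2 - 15*b'^2)) = a' - b' := by
        refine mul_left_cancel₀ (show (2:ℤ) ≠ 0 by norm_num) ?_
        linear_combination hk
      have hab' : a' % 2 = b' % 2 := by
        obtain ⟨z, hz⟩ : ∃ z, k1*(a'^2 - 15*b'^2) = z := ⟨_, rfl⟩
        rw [hz] at hk'; omega
      have hunit := Int.isUnit_iff.mp (IsUnit.of_mul_eq_one _ hm')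
      rcases Int.even_or_odd a' with he | he
      · have e0 : a' % 2 = 0 := Int.even_iff.mp he
        have e1 : b' % 2 = 0 := by omega
        have hq := mod4even a' b' e0 e1
        obtain ⟨n, hn⟩ : ∃ z, a'^2 - 15*b'^2 = z := ⟨_, rfl⟩
        rw [hn] at hq hunit
        omega
      · have e0 : a' % 2 = 1 := Int.odd_iff.mp he
        have e1 : b' % 2 = 1 := by omega
        have hq := mod8odd a' b' e0 e1
        obtain ⟨n, hn⟩ : ∃ z, a'^2 - 15*b'^2 = z := ⟨_, rfl⟩
        rw [hn] at hq hunit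
        omega
    · -- a, b odd
      have o0 : a % 2 = 1 := Int.odd_iff.mp ha
      have o1 : b % 2 = 1 := by omega
      have hq := mod8odd a b o0 o1
      have h5 := nomod5 a b
      obtain ⟨m, hmdef⟩ : ∃ z, a^2 - 15*b^2 = z := ⟨_, rfl⟩
      rw [hmdef] at hq hm h5
      have hdvd : m ∣ 4 := ⟨_, hm.symm⟩
      have hub : m ≤ 4 := Int.le_of_dvd (by norm_num) hdvd
      have hlb : -4 ≤ m := by
        have := Int.le_of_dvd (show (0:ℤ) < 4 by norm_num) ((neg_dvd).mpr hdvd)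
        omega
      have : m = 2 := by omega
      exact h5 this
  · -- W0, W1 odd
    have o0 : W0 % 2 = 1 := Int.odd_iff.mp hW0
    have o1 : W1 % 2 = 1 := by omega
    have hq := mod8odd W0 W1 o0 o1
    have h5 := nomod5 W0 W1
    obtain ⟨n, hndef⟩ : ∃ z, W0^2 - 15*W1^2 = z := ⟨_, rfl⟩
    rw [hndef] at hq E1 h5
    have hdvd : n ∣ 16 := ⟨_, E1.symm⟩
    have hub : n ≤ 16 := Int.le_of_dvd (by norm_num) hdvd
    have hlb : -16 ≤ n := by
      have := Int.le_of_dvd (show (0:ℤ) < 16 by norm_num) ((neg_dvd).mpr hdvd)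
      omega
    have hcases : n = -14 ∨ n = -6 ∨ n = 2 ∨ n = 10 := by omega
    obtain ⟨M, hMdef⟩ : ∃ z, h0^2 - 15*h1^2 = z := ⟨_, rfl⟩
    rw [hMdef] at E1
    have hn2 : n = 2 := by rcases hcases with h|h|h|h <;> rw [h] at E1 <;> omega
    exact h5 hn2

end IntArith

section AlgHelpers

open Polynomial

private lemma not_rat_sq15 (q : ℚ) : q^2 ≠ 15 := by
  intro h
  have hint : IsIntegral ℤ q := ⟨X^2 - C 15, by monicity!, by simp [h]⟩
  obtain ⟨m, hm⟩ := IsIntegrallyClosed.isIntegral_iff.mp hint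
  have hm2 : (m:ℚ)^2 = 15 := by rw [show ((m:ℚ)) = q from hm, h]
  have hm3 : m^2 = 15 := by exact_mod_cast hm2
  have hb : -4 < m ∧ m < 4 := by constructor <;> nlinarith
  obtain ⟨hb1, hb2⟩ := hb
  interval_cases m <;> omega

private lemma coeff_quad1 {R : Type*} [CommRing R] (u v : R) :
    (Polynomial.X^2 - Polynomial.C u * Polynomial.X + Polynomial.C v).coeff 1 = -u := by simp

private lemma coeff_quad0 {R : Type*} [CommRing R] (u v : R) :
    (Polynomial.X^2 - Polynomial.C u * Polynomial.X + Polynomial.C v).coeff 0 = v := by simp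

private lemma minpoly_quadratic {E L : Type*} [Field E] [Field L] [Algebra E L]
    {x : L} (hx : x ∉ Set.range (algebraMap E L)) {u v : E}
    (hrel : x^2 = algebraMap E L u * x - algebraMap E L v) :
    minpoly E x = X^2 - C u * X + C v := by
  set p : E[X] := X^2 - C u * X + C v with hp
  have hmonic : p.Monic := by unfold p; monicity!
  have hdeg : p.natDegree = 2 := by unfold p; compute_degree!
  have hroot : aeval x p = 0 := by
    simp only [hp, map_add, map_sub, map_mul, map_pow, aeval_X, aeval_C]
    linear_combination hrel
  have hint : IsIntegral E x := ⟨p, hmonic, hroot⟩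
  have hdvd : minpoly E x ∣ p := minpoly.dvd E x hroot
  have h2 : 2 ≤ (minpoly E x).natDegree := by
    rw [minpoly.two_le_natDegree_iff hint]
    intro hmem; exact hx (by exact_mod_cast hmem)
  have hle : p.natDegree ≤ (minpoly E x).natDegree := by
    rw [hdeg]; exact h2
  exact (eq_of_monic_of_dvd_of_natDegree_le (minpoly.monic hint) hmonic hdvd hle).symm

end AlgHelpers

set_option maxHeartbeats 2000000 in
open Polynomial in
/-- Let `K = ℚ(√15, √-2)` with maximal totally real subfield
`F = ℚ(√15)`.  Then there is no `α ∈ 𝓞 K` with `𝓞 K = 𝓞 F[α]`. -/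
theorem stmt8 (F K : Type*) [Field F] [Field K] [NumberField F] [NumberField K]
    [Algebra F K]
    (r s : K) (hr : r ^ 2 = 15) (hs : s ^ 2 = -2)
    (hKgen : Algebra.adjoin ℚ ({r, s} : Set K) = ⊤)
    (t : F) (ht : t ^ 2 = 15) (hFgen : Algebra.adjoin ℚ ({t} : Set F) = ⊤)
    (hrt : algebraMap F K t = r) :
    ¬ ∃ α : 𝓞 K, Algebra.adjoin (𝓞 F) ({α} : Set (𝓞 K)) = ⊤ := by
  rintro ⟨α, hadj⟩
  set i : F →+* K := (algebraMap F K) with hidef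
  have iinj : Function.Injective i := i.injective
  set P : ℚ →+* F := (algebraMap ℚ F) with hPdef
  have Pinj : Function.Injective P := P.injective
  -- t is not rational
  have tirr : t ∉ Set.range P := by
    rintro ⟨q, hq⟩
    apply not_rat_sq15 q
    apply Pinj
    rw [map_pow, hq, ht]
    norm_num
  -- coordinates on F
  have Fcoord : ∀ x : F, ∃ a b : ℚ, x = P a + P b * t := by
    intro x
    have hx : x ∈ Algebra.adjoin ℚ ({t} : Set F) := hFgen ▸ Algebra.mem_top
    induction hx using Algebra.adjoin_induction with
    | mem z hz =>
      rcases hz with rfl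
      exact ⟨0, 1, by simp⟩
    | algebraMap q => exact ⟨q, 0, by simp⟩
    | add x y hx hy ihx ihy =>
      obtain ⟨a, b, rfl⟩ := ihx
      obtain ⟨c, d, rfl⟩ := ihy
      exact ⟨a + c, b + d, by push_cast [map_add]; ring⟩
    | mul x y hx hy ihx ihy =>
      obtain ⟨a, b, rfl⟩ := ihx
      obtain ⟨c, d, rfl⟩ := ihy
      refine ⟨a*c + 15*(b*d), a*d + b*c, ?_⟩
      simp only [map_add, map_mul, map_ofNat]
      linear_combination (P b * P d) * ht
  -- uniqueness of coordinates on F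
  have Funiq : ∀ a b : ℚ, P a + P b * t = 0 → a = 0 ∧ b = 0 := by
    intro a b hab
    by_cases hb : b = 0
    · subst hb
      simp only [map_zero, zero_mul, add_zero] at hab
      exact ⟨Pinj (by simpa using hab), rfl⟩
    · exfalso
      apply tirr
      refine ⟨-(a/b), ?_⟩
      have hbne : P b ≠ 0 := fun h => hb (Pinj (by simpa using h))
      have hPa : P a = -(P b * t) := by linear_combination hab
      rw [map_neg, map_div₀, hPa, neg_div, neg_neg, mul_div_cancel_left₀ _ hbne]
  -- s is not in F
  have snr : s ∉ Set.range i := by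
    rintro ⟨u, hu⟩
    obtain ⟨a, b, rfl⟩ := Fcoord u
    have hu2 : (P a + P b * t)^2 = -2 := by
      apply iinj
      rw [map_pow, hu, hs, map_neg, map_ofNat]
    have hcomb : P (a^2 + 15*b^2 + 2) + P (2*(a*b)) * t = 0 := by
      simp only [map_add, map_mul, map_ofNat, map_pow]
      linear_combination hu2 - (P b)^2 * ht
    obtain ⟨h1, h2⟩ := Funiq _ _ hcomb
    nlinarith [sq_nonneg a, sq_nonneg b]
  -- coordinates on K over F
  have Kcoord : ∀ x : K, ∃ A B : F, x = i A + i B * s := by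
    intro x
    have hx : x ∈ Algebra.adjoin ℚ ({r, s} : Set K) := hKgen ▸ Algebra.mem_top
    induction hx using Algebra.adjoin_induction with
    | mem z hz =>
      rcases hz with rfl | rfl
      · exact ⟨t, 0, by simp [hrt]⟩
      · exact ⟨0, 1, by simp⟩
    | algebraMap q =>
      refine ⟨P q, 0, ?_⟩
      rw [map_zero, zero_mul, add_zero, hidef, hPdef, eq_ratCast (algebraMap ℚ F) q,
        map_ratCast, eq_ratCast]
    | add x y hx hy ihx ihy =>
      obtain ⟨a, b, rfl⟩ := ihx
      obtain ⟨c, d, rfl⟩ := ihy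
      exact ⟨a + c, b + d, by rw [map_add, map_add]; ring⟩
    | mul x y hx hy ihx ihy =>
      obtain ⟨a, b, rfl⟩ := ihx
      obtain ⟨c, d, rfl⟩ := ihy
      refine ⟨a*c - 2*(b*d), a*d + b*c, ?_⟩
      simp only [map_add, map_mul, map_sub, map_ofNat]
      linear_combination (i b * i d) * hs
  -- uniqueness of coordinates on K
  have Kuniq : ∀ A B : F, i A + i B * s = 0 → A = 0 ∧ B = 0 := by
    intro A B hAB
    by_cases hB : B = 0
    · subst hB
      simp only [map_zero, zero_mul, add_zero] at hAB
      exact ⟨iinj (by simpa using hAB), rfl⟩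
    · exfalso
      apply snr
      refine ⟨-(A/B), ?_⟩
      have hBne : i B ≠ 0 := fun h => hB (iinj (by simpa using h))
      rw [map_neg, map_div₀, neg_eq_iff_eq_neg, div_eq_iff hBne]
      linear_combination hAB
  -- integral elements of F have integer coordinates
  have intCoordF : ∀ x : F, IsIntegral ℤ x → ∃ a b : ℤ, x = P (a:ℚ) + P (b:ℚ) * t := by
    intro x hx
    obtain ⟨a, b, rfl⟩ := Fcoord x
    by_cases hb : b = 0
    · subst hb
      simp only [map_zero, zero_mul, add_zero] at hx ⊢
      have : IsIntegral ℤ a := by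
        rwa [isIntegral_algebraMap_iff Pinj] at hx
      obtain ⟨m, hm⟩ := IsIntegrallyClosed.isIntegral_iff.mp this
      refine ⟨m, 0, ?_⟩
      have hma : ((m:ℤ):ℚ) = a := by rw [← hm, eq_intCast]
      rw [← hma]
      simp
    · -- x has a quadratic minimal polynomial
      have hxnr : P a + P b * t ∉ Set.range P := by
        rintro ⟨q, hq⟩
        apply tirr
        refine ⟨(q - a)/b, ?_⟩
        have hbne : P b ≠ 0 := fun h => hb (Pinj (by simpa using h))
        have hPq : P b * t = P q - P a := by linear_combination -hq
        rw [map_div₀, map_sub, ← hPq, mul_div_cancel_left₀ _ hbne]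
      have hrel : (P a + P b * t)^2 = P (2*a) * (P a + P b * t) - P (a^2 - 15*b^2) := by
        simp only [map_mul, map_sub, map_add, map_pow, map_ofNat]
        linear_combination (P b)^2 * ht
      have hmp := minpoly_quadratic hxnr hrel
      have hmap : minpoly ℚ (P a + P b * t)
          = (minpoly ℤ (P a + P b * t)).map (algebraMap ℤ ℚ) :=
        minpoly.isIntegrallyClosed_eq_field_fractions' ℚ hx
      -- coefficients are integers
      have hc1 : ∃ A : ℤ, (A:ℚ) = 2*a := by
        refine ⟨-((minpoly ℤ (P a + P b * t)).coeff 1), ?_⟩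
        have h := congrArg (fun p => Polynomial.coeff p 1) (hmap.symm.trans hmp)
        simp only [Polynomial.coeff_map, coeff_quad1, eq_intCast] at h
        push_cast
        linarith [h]
      have hc0 : ∃ C : ℤ, (C:ℚ) = a^2 - 15*b^2 := by
        refine ⟨(minpoly ℤ (P a + P b * t)).coeff 0, ?_⟩
        have h := congrArg (fun p => Polynomial.coeff p 0) (hmap.symm.trans hmp)
        simp only [Polynomial.coeff_map, coeff_quad0, eq_intCast] at h
        push_cast
        linarith [h]
      obtain ⟨A, hA⟩ := hc1
      obtain ⟨C, hC⟩ := hc0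
      -- 30 b is an integer
      have hyint : IsIntegral ℤ ((30*b : ℚ)) := by
        refine ⟨X^2 - Polynomial.C (15*(A^2 - 4*C)), by monicity!, ?_⟩
        simp only [Polynomial.eval₂_sub, Polynomial.eval₂_pow, Polynomial.eval₂_X,
          Polynomial.eval₂_C]
        rw [eq_intCast]
        push_cast
        rw [hA, hC]
        ring
      obtain ⟨m, hmq⟩ := IsIntegrallyClosed.isIntegral_iff.mp hyint
      have hmq' : (m:ℚ) = 30*b := by rw [← hmq, eq_intCast]
      -- the integer relation
      have hrelZ : 15*A^2 - m^2 = 60*C := by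
        have : (15*A^2 - m^2 : ℚ) = 60*C := by
          push_cast
          rw [hA, hmq', hC]
          ring
        exact_mod_cast this
      -- conclude A = 2a0, m = 30b0
      have hAeven : A % 2 = 0 := by
        have q1 := sq_emod4 A
        have q2 := sq_emod4 m
        have q3 := sq_emod2 A
        obtain ⟨X1, hX1⟩ : ∃ z, A^2 = z := ⟨_, rfl⟩
        obtain ⟨X2, hX2⟩ : ∃ z, m^2 = z := ⟨_, rfl⟩
        rw [hX1] at q1 q3 hrelZ; rw [hX2] at q2 hrelZ
        omega
      obtain ⟨a0, rfl⟩ : ∃ z, A = 2*z := ⟨A/2, by omega⟩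
      have hrelZ2 : 60*a0^2 - m^2 = 60*C := by linear_combination hrelZ
      have hmeven : m % 2 = 0 := by
        have q2 := sq_emod2 m
        obtain ⟨X2, hX2⟩ : ∃ z, m^2 = z := ⟨_, rfl⟩
        obtain ⟨Xa, hXa⟩ : ∃ z, a0^2 = z := ⟨_, rfl⟩
        rw [hX2] at q2 hrelZ2; rw [hXa] at hrelZ2
        omega
      obtain ⟨m1, rfl⟩ : ∃ z, m = 2*z := ⟨m/2, by omega⟩
      have hrelZ' : 15*a0^2 - m1^2 = 15*C := by
        refine mul_left_cancel₀ (show (4:ℤ) ≠ 0 by norm_num) ?_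
        linear_combination hrelZ2
      have h15 : (15:ℤ) ∣ m1 := by
        have h3 : (3:ℤ) ∣ m1 := by
          have hd : (3:ℤ) ∣ m1^2 := ⟨5*a0^2 - 5*C, by linarith [hrelZ']⟩
          exact (Int.Prime.dvd_pow' (by norm_num) hd)
        have h5 : (5:ℤ) ∣ m1 := by
          have hd : (5:ℤ) ∣ m1^2 := ⟨3*a0^2 - 3*C, by linarith [hrelZ']⟩
          exact (Int.Prime.dvd_pow' (by norm_num) hd)
        omega
      obtain ⟨b0, rfl⟩ : ∃ z, m1 = 15*z := h15
      refine ⟨a0, b0, ?_⟩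
      have ha' : a = (a0:ℚ) := by push_cast at hA; linarith
      have hb' : b = (b0:ℚ) := by push_cast at hmq'; linarith
      rw [ha', hb']
  -- ===== main argument =====
  -- decompose α over F
  obtain ⟨Pα, w, hαdec⟩ := Kcoord (α : K)
  -- the case w = 0 : α ∈ F, contradiction since s ∈ adjoin
  by_cases hw : w = 0
  · subst hw
    rw [map_zero, zero_mul, add_zero] at hαdec
    have hsint : IsIntegral ℤ s := ⟨X^2 + C 2, by monicity!, by
      simp only [Polynomial.eval₂_add, Polynomial.eval₂_pow, Polynomial.eval₂_X,
        Polynomial.eval₂_C]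
      simp only [map_ofNat]
      linear_combination hs⟩
    let sO : 𝓞 K := ⟨s, hsint⟩
    have hsmem : sO ∈ Algebra.adjoin (𝓞 F) ({α} : Set (𝓞 K)) := by
      rw [hadj]; exact Algebra.mem_top
    have : ∀ x : 𝓞 K, x ∈ Algebra.adjoin (𝓞 F) ({α} : Set (𝓞 K)) →
        (x : K) ∈ Set.range i := by
      intro x hx
      induction hx using Algebra.adjoin_induction with
      | mem z hz => rcases hz with rfl; exact ⟨Pα, hαdec.symm⟩
      | algebraMap y => exact ⟨(y : F), rfl⟩
      | add x y hx hy ihx ihy =>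
        obtain ⟨A, hA⟩ := ihx; obtain ⟨B, hB⟩ := ihy
        refine ⟨A + B, ?_⟩
        rw [map_add, hA, hB]
        norm_cast
      | mul x y hx hy ihx ihy =>
        obtain ⟨A, hA⟩ := ihx; obtain ⟨B, hB⟩ := ihy
        refine ⟨A * B, ?_⟩
        rw [map_mul, hA, hB]
        norm_cast
    exact snr (this _ hsmem)
  -- now w ≠ 0 : minimal polynomial of α over F is quadratic
  have hαnr : (α : K) ∉ Set.range i := by
    rintro ⟨z, hz⟩
    apply snr
    refine ⟨(z - Pα)/w, ?_⟩
    have hwne : i w ≠ 0 := fun h => hw (iinj (by simpa using h))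
    rw [hαdec] at hz
    rw [map_div₀, div_eq_iff hwne, map_sub]
    linear_combination hz
  have hrelα : (α : K)^2 = i (2*Pα) * (α : K) - i (Pα^2 + 2*w^2) := by
    rw [hαdec]
    simp only [map_mul, map_add, map_pow, map_ofNat]
    linear_combination (i w)^2 * hs
  have hmpα := minpoly_quadratic hαnr hrelα
  have hαintOF : IsIntegral (𝓞 F) (α : K) := (RingOfIntegers.isIntegral_coe α).tower_top
  have hmapα : minpoly F (α : K) = (minpoly (𝓞 F) (α : K)).map (algebraMap (𝓞 F) F) :=
    minpoly.isIntegrallyClosed_eq_field_fractions' F hαintOF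
  -- U := 2 Pα and V := Pα² + 2 w² are integral
  have hUint : IsIntegral ℤ (2*Pα) := by
    have h := congrArg (fun p => Polynomial.coeff p 1) (hmapα.symm.trans hmpα)
    simp only [Polynomial.coeff_map, coeff_quad1] at h
    have h2 : 2*Pα = -(algebraMap (𝓞 F) F ((minpoly (𝓞 F) (α:K)).coeff 1)) := by
      rw [h]; ring
    rw [h2]
    exact (RingOfIntegers.isIntegral_coe _).neg
  have hVint : IsIntegral ℤ (Pα^2 + 2*w^2) := by
    have h := congrArg (fun p => Polynomial.coeff p 0) (hmapα.symm.trans hmpα)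
    simp only [Polynomial.coeff_map, coeff_quad0] at h
    rw [← h]
    exact RingOfIntegers.isIntegral_coe _
  -- 4w is integral
  have hsint : IsIntegral ℤ s := ⟨X^2 + C 2, by monicity!, by
    simp only [Polynomial.eval₂_add, Polynomial.eval₂_pow, Polynomial.eval₂_X,
      Polynomial.eval₂_C]
    simp only [map_ofNat]
    linear_combination hs⟩
  have hGint : IsIntegral ℤ (4*w) := by
    have hβ : IsIntegral ℤ ((α:K) + (α:K) - i (2*Pα)) := by
      have h1 := RingOfIntegers.isIntegral_coe α
      have h2 : IsIntegral ℤ (i (2*Pα)) := hUint.map (IsScalarTower.toAlgHom ℤ F K)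
      exact (h1.add h1).sub h2
    have hprod : IsIntegral ℤ (((α:K) + (α:K) - i (2*Pα)) * s) := hβ.mul hsint
    have hval : ((α:K) + (α:K) - i (2*Pα)) * s = i (-(4*w)) := by
      rw [hαdec]
      simp only [map_mul, map_neg, map_add, map_ofNat]
      linear_combination (2 * i w) * hs
    rw [hval, isIntegral_algebraMap_iff iinj] at hprod
    have := hprod.neg
    simpa using this
  -- θ = s(1+r)/2 is integral
  set θ : K := i ((1+t)/2) * s with hθdef
  have hc2 : (2:K) * i ((1+t)/2) = 1 + r := by
    have h1 : (2:K) * i ((1+t)/2) = i (2*((1+t)/2)) := by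
      rw [map_mul, map_ofNat]
    rw [h1, show (2*((1+t)/2) : F) = 1 + t by ring, map_add, map_one, hrt]
  have hθsq : θ^2 = -8 - r := by
    refine mul_left_cancel₀ (show (4:K) ≠ 0 by norm_num) ?_
    rw [hθdef]
    linear_combination (s^2*(2*(i ((1+t)/2))+1+r))*hc2 + (1+r)^2*hs - 2*hr
  have hθint : IsIntegral ℤ θ := by
    refine ⟨X^4 + C 16 * X^2 + C 49, by monicity!, ?_⟩
    simp only [Polynomial.eval₂_add, Polynomial.eval₂_mul, Polynomial.eval₂_pow,
      Polynomial.eval₂_X, Polynomial.eval₂_C]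
    simp only [map_ofNat]
    linear_combination (θ^2 + (-8-r) + 16)*hθsq + hr
  -- lift the minimal polynomial coefficients to 𝓞 F
  set u0 : 𝓞 F := ⟨2*Pα, hUint⟩ with hu0def
  set v0 : 𝓞 F := ⟨Pα^2 + 2*w^2, hVint⟩ with hv0def
  have hcoeF : ∀ y : 𝓞 F, algebraMap (𝓞 K) K (algebraMap (𝓞 F) (𝓞 K) y) = i (y:F) :=
    fun _ => rfl
  set m0 : (𝓞 F)[X] := X^2 - C u0 * X + C v0 with hm0def
  have hm0 : m0.Monic := by unfold m0; monicity!
  have hnd0 : m0.natDegree = 2 := by unfold m0; compute_degree!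
  have hm0ne1 : m0 ≠ 1 := by
    intro h
    rw [h] at hnd0
    simp at hnd0
  have hroot0 : aeval α m0 = 0 := by
    apply RingOfIntegers.coe_injective
    rw [hm0def]
    simp only [map_sub, map_add, map_mul, map_pow, aeval_X, aeval_C, map_zero]
    rw [hcoeF u0, hcoeF v0, hu0def, hv0def]
    change (α:K)^2 - i (2*Pα) * (α:K) + i (Pα^2 + 2*w^2) = 0
    linear_combination hrelα
  -- every element of 𝓞 K is g + h α with g, h ∈ 𝓞 F
  have decomp : ∀ x : 𝓞 K, ∃ g h : 𝓞 F, (x:K) = i (g:F) + i (h:F) * (α:K) := by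
    intro x
    have hx : x ∈ Algebra.adjoin (𝓞 F) ({α} : Set (𝓞 K)) := by
      rw [hadj]; exact Algebra.mem_top
    rw [Algebra.adjoin_singleton_eq_range_aeval] at hx
    obtain ⟨p, hp⟩ := hx
    have hrem : aeval α (p %ₘ m0) = x := by
      have h2 := congrArg (aeval α) (modByMonic_add_div p m0)
      simp only [map_add, map_mul, hroot0, zero_mul, add_zero] at h2
      rw [h2]; exact hp
    have hd1 : (p %ₘ m0).natDegree ≤ 1 := by
      have := natDegree_modByMonic_lt p hm0 hm0ne1
      omega
    refine ⟨(p %ₘ m0).coeff 0, (p %ₘ m0).coeff 1, ?_⟩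
    have hx2 : x = algebraMap (𝓞 F) (𝓞 K) ((p %ₘ m0).coeff 1) * α
        + algebraMap (𝓞 F) (𝓞 K) ((p %ₘ m0).coeff 0) := by
      rw [← hrem]
      conv_lhs => rw [eq_X_add_C_of_natDegree_le_one hd1]
      simp only [map_add, map_mul, aeval_X, aeval_C]
    have hfin := congrArg (algebraMap (𝓞 K) K) hx2
    rw [map_add, map_mul, hcoeF, hcoeF] at hfin
    exact hfin.trans (by ring)
  -- apply to s and θ
  let sO : 𝓞 K := ⟨s, hsint⟩
  let θO : 𝓞 K := ⟨θ, hθint⟩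
  obtain ⟨gs, hsc, hseq0⟩ := decomp sO
  obtain ⟨gθ, hθc, hθeq0⟩ := decomp θO
  have hseq : s = i (gs:F) + i (hsc:F) * (α:K) := hseq0
  have hθeq : θ = i (gθ:F) + i (hθc:F) * (α:K) := hθeq0
  -- extract the s-coordinates
  have es : (hsc:F) * w = 1 := by
    have h0 : i ((gs:F) + (hsc:F)*Pα) + i ((hsc:F)*w - 1) * s = 0 := by
      rw [hαdec] at hseq
      simp only [map_add, map_mul, map_sub, map_one]
      linear_combination -hseq
    have := (Kuniq _ _ h0).2
    exact eq_of_sub_eq_zero this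
  have eθ : (hθc:F) * w = (1+t)/2 := by
    have h0 : i ((gθ:F) + (hθc:F)*Pα) + i ((hθc:F)*w - (1+t)/2) * s = 0 := by
      rw [hαdec] at hθeq
      rw [hθdef] at hθeq
      simp only [map_add, map_mul, map_sub, map_one]
      linear_combination -hθeq
    have := (Kuniq _ _ h0).2
    exact eq_of_sub_eq_zero this
  -- pass to integer coordinates
  obtain ⟨W0, W1, hW⟩ := intCoordF (4*w) hGint
  obtain ⟨B0, B1, hB⟩ := intCoordF (2*Pα) hUint
  obtain ⟨V0, V1, hV⟩ := intCoordF (Pα^2 + 2*w^2) hVint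
  obtain ⟨c0, c1, hc⟩ := intCoordF ((hsc:F)) (RingOfIntegers.isIntegral_coe hsc)
  obtain ⟨d0, d1, hd⟩ := intCoordF ((hθc:F)) (RingOfIntegers.isIntegral_coe hθc)
  -- equation (i) : hsc * 4w = 4
  have eqi : (P (c0:ℚ) + P (c1:ℚ) * t) * (P (W0:ℚ) + P (W1:ℚ) * t) = 4 := by
    rw [← hc, ← hW]
    linear_combination 4*es
  have exti : P ((c0:ℚ)*(W0:ℚ) + 15*((c1:ℚ)*(W1:ℚ)) - 4)
      + P ((c0:ℚ)*(W1:ℚ) + (c1:ℚ)*(W0:ℚ)) * t = 0 := by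
    simp only [map_sub, map_add, map_mul, map_ofNat]
    linear_combination eqi - (P (c1:ℚ) * P (W1:ℚ))*ht
  have hi := Funiq _ _ exti
  have i1 : c0*W0 + 15*(c1*W1) = 4 := by
    have h := hi.1
    have h2 : ((c0*W0 + 15*(c1*W1) : ℤ) : ℚ) = ((4:ℤ):ℚ) := by push_cast; linarith
    exact_mod_cast h2
  have i2 : c0*W1 + c1*W0 = 0 := by
    have h := hi.2
    have h2 : ((c0*W1 + c1*W0 : ℤ) : ℚ) = ((0:ℤ):ℚ) := by push_cast; linarith
    exact_mod_cast h2
  -- equation (ii) : hθc * 4w = 2 + 2t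
  have eqj : (P (d0:ℚ) + P (d1:ℚ) * t) * (P (W0:ℚ) + P (W1:ℚ) * t) = 2 + 2*t := by
    rw [← hd, ← hW]
    linear_combination 4*eθ
  have extj : P ((d0:ℚ)*(W0:ℚ) + 15*((d1:ℚ)*(W1:ℚ)) - 2)
      + P ((d0:ℚ)*(W1:ℚ) + (d1:ℚ)*(W0:ℚ) - 2) * t = 0 := by
    simp only [map_sub, map_add, map_mul, map_ofNat]
    linear_combination eqj - (P (d1:ℚ) * P (W1:ℚ))*ht
  have hj := Funiq _ _ extj
  have j1 : d0*W0 + 15*(d1*W1) = 2 := by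
    have h := hj.1
    have h2 : ((d0*W0 + 15*(d1*W1) : ℤ) : ℚ) = ((2:ℤ):ℚ) := by push_cast; linarith
    exact_mod_cast h2
  have j2 : d0*W1 + d1*W0 = 2 := by
    have h := hj.2
    have h2 : ((d0*W1 + d1*W0 : ℤ) : ℚ) = ((2:ℤ):ℚ) := by push_cast; linarith
    exact_mod_cast h2
  -- equation (iii) : 8 V = 2 U² + (4w)²
  have eqk : (8:F) * (P (V0:ℚ) + P (V1:ℚ) * t)
      = 2*(P (B0:ℚ) + P (B1:ℚ) * t)^2 + (P (W0:ℚ) + P (W1:ℚ) * t)^2 := by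
    rw [← hV, ← hB, ← hW]
    ring
  have extk : P (2*(B0:ℚ)^2 + 30*(B1:ℚ)^2 + (W0:ℚ)^2 + 15*(W1:ℚ)^2 - 8*(V0:ℚ))
      + P (4*((B0:ℚ)*(B1:ℚ)) + 2*((W0:ℚ)*(W1:ℚ)) - 8*(V1:ℚ)) * t = 0 := by
    simp only [map_sub, map_add, map_mul, map_pow, map_ofNat]
    linear_combination -eqk - (2*(P (B1:ℚ))^2 + (P (W1:ℚ))^2)*ht
  have hk := Funiq _ _ extk
  have e5 : 2*B0^2 + 30*B1^2 + W0^2 + 15*W1^2 = 8*V0 := by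
    have h := hk.1
    have h2 : ((2*B0^2 + 30*B1^2 + W0^2 + 15*W1^2 : ℤ) : ℚ) = ((8*V0:ℤ):ℚ) := by
      push_cast; linarith
    exact_mod_cast h2
  have e6' : 4*(B0*B1) + 2*(W0*W1) = 8*V1 := by
    have h := hk.2
    have h2 : ((4*(B0*B1) + 2*(W0*W1) : ℤ) : ℚ) = ((8*V1:ℤ):ℚ) := by
      push_cast; linarith
    exact_mod_cast h2
  have e6 : 2*(B0*B1) + W0*W1 = 4*V1 := by linarith
  exact keyZ W0 W1 B0 B1 V0 V1 c0 c1 d0 d1 i1 i2 j1 j2 e5 e6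
end

section
/- Let K be a CM field of degree 2g with g ≥ 2, with maximal totally real subfield F, and fix γ ∈ O_K with O_K = O_F[γ] and η ∈ O_F with ℤ[η] = O_F. For each unit u ∈ O_F^×, there is at most one a ∈ ℤ such that α = (u(γ - γ̄) + η + a)/2 satisfies αᾱ ∈ ℚ. -/
open NumberField

/-- Let `K` be a CM field of degree `2g`, `g ≥ 2`, with maximal
totally real subfield `F` and complex conjugation `c`.  Fix `γ ∈ 𝓞 K` with
`𝓞 K = 𝓞 F[γ]` and `η ∈ 𝓞 F` with `ℤ[η] = 𝓞 F`.  For each unit `u ∈ 𝓞 F ˣ` there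
is at most one `a ∈ ℤ` such that `α = (u(γ - γ̄) + η + a)/2` satisfies `α·ᾱ ∈ ℚ`. -/
theorem stmt10 (g : ℕ) (hg : 2 ≤ g)
    (F K : Type*) [Field F] [Field K] [NumberField F] [NumberField K] [Algebra F K]
    (hF : TotallyReal F) (hK : TotallyImaginary K)
    (hgF : Module.finrank ℚ F = g) (h2 : Module.finrank F K = 2)
    (c : K ≃ₐ[F] K)
    (hc : ∀ φ : K →+* ℂ, ∀ x : K, φ (c x) = (starRingEnd ℂ) (φ x))
    (γ : 𝓞 K) (hγ : Algebra.adjoin (𝓞 F) ({γ} : Set (𝓞 K)) = ⊤)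
    (η : 𝓞 F) (hη : Algebra.adjoin ℤ ({η} : Set (𝓞 F)) = ⊤)
    (u : (𝓞 F)ˣ) :
    ∀ a₁ a₂ : ℤ,
      (∃ q : ℚ,
        ((algebraMap F K (algebraMap (𝓞 F) F (u : 𝓞 F)) *
              (algebraMap (𝓞 K) K γ - c (algebraMap (𝓞 K) K γ)) +
            algebraMap F K (algebraMap (𝓞 F) F η) + (a₁ : K)) / 2) *
          c ((algebraMap F K (algebraMap (𝓞 F) F (u : 𝓞 F)) *
              (algebraMap (𝓞 K) K γ - c (algebraMap (𝓞 K) K γ)) +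
            algebraMap F K (algebraMap (𝓞 F) F η) + (a₁ : K)) / 2) = (q : K)) →
      (∃ q : ℚ,
        ((algebraMap F K (algebraMap (𝓞 F) F (u : 𝓞 F)) *
              (algebraMap (𝓞 K) K γ - c (algebraMap (𝓞 K) K γ)) +
            algebraMap F K (algebraMap (𝓞 F) F η) + (a₂ : K)) / 2) *
          c ((algebraMap F K (algebraMap (𝓞 F) F (u : 𝓞 F)) *
              (algebraMap (𝓞 K) K γ - c (algebraMap (𝓞 K) K γ)) +
            algebraMap F K (algebraMap (𝓞 F) F η) + (a₂ : K)) / 2) = (q : K)) →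
      a₁ = a₂ := by
  intro a₁ a₂ h1e h2e
  obtain ⟨q₁, h1⟩ := h1e
  obtain ⟨q₂, h2'⟩ := h2e
  by_contra hne
  -- c is an involution
  have hc2 : ∀ x : K, c (c x) = x := by
    obtain ⟨φ⟩ := (inferInstance : Nonempty (K →+* ℂ))
    intro x; apply φ.injective; rw [hc, hc, Complex.conj_conj]
  set G : K := algebraMap (𝓞 K) K γ with hG
  set U : K := algebraMap F K (algebraMap (𝓞 F) F (u : 𝓞 F)) with hU
  set E : K := algebraMap F K (algebraMap (𝓞 F) F η) with hE
  set B : K := U * (G - c G) with hBdef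
  have hcU : c U = U := c.commutes _
  have hcE : c E = E := c.commutes _
  have hcB : c B = -B := by
    simp only [hBdef, map_mul, map_sub, hcU, hc2]
    ring
  have key : ∀ (a : ℤ) (q : ℚ),
      ((B + E + (a : K)) / 2) * c ((B + E + (a : K)) / 2) = (q : K) →
      (E + a) ^ 2 - B ^ 2 = 4 * (q : K) := by
    intro a q h
    have hca : c ((a : K)) = (a : K) := map_intCast (c : K →+* K) a
    have hcd : c ((B + E + (a : K)) / 2) = (-B + E + (a : K)) / 2 := by
      rw [map_div₀, map_add, map_add, hcB, hcE, hca, map_ofNat]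
    rw [hcd] at h
    have h4 : (B + E + (a : K)) * (-B + E + (a : K)) = 4 * (q : K) := by
      field_simp at h
      linear_combination h
    linear_combination h4
  have e1 := key a₁ q₁ h1
  have e2 := key a₂ q₂ h2'
  have hsub : (a₁ - a₂ : K) * (2 * E + a₁ + a₂) = 4 * ((q₁ : K) - q₂) := by
    push_cast
    linear_combination e1 - e2
  have har : (a₁ - a₂ : ℚ) ≠ 0 := by
    rw [sub_ne_zero]; exact_mod_cast fun h => hne (by exact_mod_cast h)
  set r : ℚ := (4 * (q₁ - q₂) / (a₁ - a₂) - a₁ - a₂) / 2 with hr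
  have harK : ((a₁ : K) - a₂) ≠ 0 := by
    have h0 : ((a₁ - a₂ : ℤ) : K) ≠ 0 := Int.cast_ne_zero.mpr (sub_ne_zero.mpr hne)
    push_cast at h0; exact h0
  have hEr : E = algebraMap ℚ K r := by
    rw [eq_ratCast (algebraMap ℚ K) r, hr]
    push_cast
    field_simp
    linear_combination hsub
  have hEF : algebraMap (𝓞 F) F η = algebraMap ℚ F r := by
    apply (algebraMap F K).injective
    rw [← hE, hEr, ← IsScalarTower.algebraMap_apply]
  have hmem : ∀ x : 𝓞 F, algebraMap (𝓞 F) F x ∈ Set.range (algebraMap ℚ F) := by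
    intro x
    have hx : x ∈ Algebra.adjoin ℤ ({η} : Set (𝓞 F)) := hη ▸ Algebra.mem_top
    induction hx using Algebra.adjoin_induction with
    | mem y hy =>
      rcases hy with rfl
      exact ⟨r, hEF.symm⟩
    | algebraMap n => exact ⟨n, by simp [map_intCast]⟩
    | add y z _ _ hy hz =>
      obtain ⟨p, hp⟩ := hy; obtain ⟨q, hq⟩ := hz
      exact ⟨p + q, by rw [map_add, map_add, hp, hq]⟩
    | mul y z _ _ hy hz =>
      obtain ⟨p, hp⟩ := hy; obtain ⟨q, hq⟩ := hz
      exact ⟨p * q, by rw [map_mul, map_mul, hp, hq]⟩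
  have hsurj : Function.Surjective (algebraMap ℚ F) := by
    intro y
    obtain ⟨a, b, hb, hab⟩ := IsFractionRing.div_surjective (A := 𝓞 F) y
    obtain ⟨p, hp⟩ := hmem a
    obtain ⟨q, hq⟩ := hmem b
    exact ⟨p / q, by rw [map_div₀, hp, hq, hab]⟩
  have hone : Module.finrank ℚ F = 1 := by
    have e : ℚ ≃ₐ[ℚ] F :=
      AlgEquiv.ofBijective (Algebra.ofId ℚ F) ⟨(algebraMap ℚ F).injective, hsurj⟩
    rw [← e.toLinearEquiv.finrank_eq, Module.finrank_self]
  omega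
end

section
/- Let F be a real quadratic field and η ∈ O_F \ ℤ. There exists a constant C₂ > 0 depending only on η such that for all b, c ∈ ℤ with c ≠ 0, the element β = b + cη satisfies h(β) ≤ C₂·|c|·√|N_{F/ℚ}(β)|. In fact one may take C₂ = h(η) + (|t| + √(t² + 4(|n_η| + 1)))/2, where t = Tr_{F/ℚ}(η) and n_η = N_{F/ℚ}(η). -/
open NumberField

/-- The height of an element of a number field: the maximum of the absolute values
of its images under all complex embeddings. -/
noncomputable def height (F : Type*) [Field F] [NumberField F] (α : F) : ℝ :=
  ⨆ ρ : F →+* ℂ, ‖ρ α‖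

section aux
variable {F : Type*} [Field F] [NumberField F]

lemma aux_bdd (α : F) : BddAbove (Set.range fun ρ : F →+* ℂ => ‖ρ α‖) :=
  Set.Finite.bddAbove (Set.finite_range _)

lemma aux_le_height (α : F) (ρ : F →+* ℂ) : ‖ρ α‖ ≤ height F α :=
  le_ciSup (aux_bdd α) ρ

lemma aux_height_nonneg (α : F) : 0 ≤ height F α :=
  Real.iSup_nonneg fun _ => norm_nonneg _

lemma aux_norm_emb (x : F) : ((Algebra.norm ℚ x : ℚ) : ℂ) = ∏ ρ : F →+* ℂ, ρ x := by
  rw [show ((Algebra.norm ℚ x : ℚ) : ℂ) = algebraMap ℚ ℂ (Algebra.norm ℚ x) from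
    (eq_ratCast _ _).symm, Algebra.norm_eq_prod_embeddings ℚ ℂ x]
  exact (Fintype.prod_equiv (RingHom.equivRatAlgHom _ _) _ _ fun _ => rfl).symm

lemma aux_trace_emb (x : F) : ((Algebra.trace ℚ F x : ℚ) : ℂ) = ∑ ρ : F →+* ℂ, ρ x := by
  rw [show ((Algebra.trace ℚ F x : ℚ) : ℂ) = algebraMap ℚ ℂ (Algebra.trace ℚ F x) from
    (eq_ratCast _ _).symm, trace_eq_sum_embeddings ℂ (x := x)]
  exact (Fintype.sum_equiv (RingHom.equivRatAlgHom _ _) _ _ fun _ => rfl).symm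

lemma quadlem {X a d : ℝ} (hd : 0 ≤ d) (h : X^2 ≤ a*X + d) :
    X ≤ (a + Real.sqrt (a^2 + 4*d)) / 2 := by
  have h1 : (X - a/2)^2 ≤ (a^2 + 4*d)/4 := by nlinarith
  have h2 : X - a/2 ≤ Real.sqrt ((a^2+4*d)/4) :=
    calc X - a/2 ≤ |X - a/2| := le_abs_self _
    _ = Real.sqrt ((X - a/2)^2) := (Real.sqrt_sq_eq_abs _).symm
    _ ≤ _ := Real.sqrt_le_sqrt h1
  have h4 : Real.sqrt ((a^2+4*d)/4) = Real.sqrt (a^2+4*d) / 2 := by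
    rw [Real.sqrt_div (by positivity), show Real.sqrt 4 = 2 by
      rw [show (4:ℝ) = 2^2 by norm_num, Real.sqrt_sq (by norm_num)]]
  linarith [h4 ▸ h2]

end aux


/-- Let `F` be a real quadratic field and `η ∈ 𝓞 F \ ℤ`.  With
`t = Tr_{F/ℚ}(η)` and `n_η = N_{F/ℚ}(η)`, set
`C₂ = h(η) + (|t| + √(t² + 4(|n_η| + 1)))/2 > 0` (depending only on `η`).  Then for
all `b, c ∈ ℤ` with `c ≠ 0`, the element `β = b + c·η` satisfies
`h(β) ≤ C₂·|c|·√|N_{F/ℚ}(β)|`. -/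
theorem stmt12 (F : Type*) [Field F] [NumberField F]
    (h2 : Module.finrank ℚ F = 2) (hF : TotallyReal F)
    (η : 𝓞 F) (hη : ¬ ∃ m : ℤ, algebraMap (𝓞 F) F η = (m : F)) :
    0 < height F (algebraMap (𝓞 F) F η) +
        (|(Algebra.trace ℚ F (algebraMap (𝓞 F) F η) : ℝ)| +
          Real.sqrt ((Algebra.trace ℚ F (algebraMap (𝓞 F) F η) : ℝ) ^ 2 +
            4 * (|(Algebra.norm ℚ (algebraMap (𝓞 F) F η) : ℝ)| + 1))) / 2 ∧
    ∀ b c : ℤ, c ≠ 0 →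
      height F ((b : F) + (c : F) * algebraMap (𝓞 F) F η) ≤
        (height F (algebraMap (𝓞 F) F η) +
          (|(Algebra.trace ℚ F (algebraMap (𝓞 F) F η) : ℝ)| +
            Real.sqrt ((Algebra.trace ℚ F (algebraMap (𝓞 F) F η) : ℝ) ^ 2 +
              4 * (|(Algebra.norm ℚ (algebraMap (𝓞 F) F η) : ℝ)| + 1))) / 2) *
        |(c : ℝ)| *
        Real.sqrt |(Algebra.norm ℚ ((b : F) + (c : F) * algebraMap (𝓞 F) F η) : ℝ)| := by
  classical
  have hcard : Fintype.card (F →+* ℂ) = 2 := by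
    rw [Embeddings.card F ℂ, h2]
  have hnonempty : Nonempty (F →+* ℂ) := Fintype.card_pos_iff.mp (by omega)
  set x : F := algebraMap (𝓞 F) F η with hxdef
  set T : ℝ := ((Algebra.trace ℚ F x : ℚ) : ℝ) with hTdef
  set Nn : ℝ := ((Algebra.norm ℚ x : ℚ) : ℝ) with hNndef
  have hH0 : 0 ≤ height F x := aux_height_nonneg x
  constructor
  · have h2' : 0 < (|T| + Real.sqrt (T^2 + 4*(|Nn|+1)))/2 := by positivity
    linarith
  intro b c hc
  set β : F := (b : F) + (c : F) * x with hβdef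
  set NB : ℝ := ((Algebra.norm ℚ β : ℚ) : ℝ) with hNBdef
  -- β ≠ 0
  have hcQ : ((c:ℚ)) ≠ 0 := Int.cast_ne_zero.mpr hc
  have hβ0 : β ≠ 0 := by
    intro h0
    have hcF : ((c:ℤ):F) ≠ 0 := Int.cast_ne_zero.mpr hc
    have hxq : x = algebraMap ℚ F (-(b:ℚ)/(c:ℚ)) := by
      rw [eq_ratCast (algebraMap ℚ F), Rat.cast_div, Rat.cast_neg, Rat.cast_intCast,
        Rat.cast_intCast, eq_div_iff hcF]
      linear_combination h0
    have hint : IsIntegral ℤ x := RingOfIntegers.isIntegral_coe η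
    rw [hxq] at hint
    have hq : IsIntegral ℤ (-(b:ℚ)/(c:ℚ)) :=
      (isIntegral_algebraMap_iff (algebraMap ℚ F).injective).mp hint
    obtain ⟨m, hm⟩ := IsIntegrallyClosed.isIntegral_iff.mp hq
    exact hη ⟨m, by rw [hxq, ← hm]; simp⟩
  -- the norm of β is a nonzero integer
  have hNint : ∃ k : ℤ, (k : ℚ) = Algebra.norm ℚ β := by
    refine ⟨Algebra.norm ℤ ((b : 𝓞 F) + (c : 𝓞 F) * η), ?_⟩
    rw [Algebra.coe_norm_int]
    congr 1
  have hN0 : Algebra.norm ℚ β ≠ 0 := Algebra.norm_ne_zero_iff.mpr hβ0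
  have hNb1 : (1:ℝ) ≤ |NB| := by
    obtain ⟨k, hk⟩ := hNint
    have hk0 : k ≠ 0 := by
      rintro rfl
      exact hN0 (by exact_mod_cast hk.symm)
    rw [hNBdef, ← hk]
    push_cast
    rw [← Int.cast_abs]
    exact_mod_cast Int.one_le_abs hk0
  -- the two embeddings
  obtain ⟨σ, τ, hστ, huniv⟩ := Finset.card_eq_two.mp
    (by rw [Finset.card_univ, hcard] : (Finset.univ : Finset (F →+* ℂ)).card = 2)
  have hprod : ∀ y : F, ((Algebra.norm ℚ y : ℚ) : ℂ) = σ y * τ y := by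
    intro y
    rw [aux_norm_emb, show (Finset.univ : Finset (F →+* ℂ)) = {σ, τ} from huniv,
      Finset.prod_pair hστ]
  have hsum : ((Algebra.trace ℚ F x : ℚ) : ℂ) = σ x + τ x := by
    rw [aux_trace_emb, show (Finset.univ : Finset (F →+* ℂ)) = {σ, τ} from huniv,
      Finset.sum_pair hστ]
  have hρβ : ∀ ρ : F →+* ℂ, ρ β = (b:ℂ) + (c:ℂ) * ρ x := by
    intro ρ
    rw [hβdef]
    simp [map_add, map_mul, map_intCast]
  -- the algebraic identity
  have hidQ : Algebra.norm ℚ β =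
      (b:ℚ)^2 + (Algebra.trace ℚ F x) * (b:ℚ) * (c:ℚ) + (Algebra.norm ℚ x) * (c:ℚ)^2 := by
    have h1 := hprod x
    have h3 := hprod β
    rw [hρβ σ, hρβ τ] at h3
    have hC : ((Algebra.norm ℚ β : ℚ) : ℂ) =
        (((b:ℚ)^2 + (Algebra.trace ℚ F x) * (b:ℚ) * (c:ℚ) + (Algebra.norm ℚ x) * (c:ℚ)^2 : ℚ) : ℂ) := by
      push_cast
      rw [h3]
      push_cast at h1 hsum ⊢
      linear_combination (-(b:ℂ)*(c:ℂ)) * hsum + (-(c:ℂ)^2) * h1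
    exact_mod_cast hC
  have hidR : NB = (b:ℝ)^2 + T*(b:ℝ)*(c:ℝ) + Nn*(c:ℝ)^2 := by
    rw [hNBdef, hTdef, hNndef]
    exact_mod_cast congrArg (fun q : ℚ => (q : ℝ)) hidQ
  -- height bound
  have hhb : height F β ≤ |(b:ℝ)| + |(c:ℝ)| * height F x := by
    refine ciSup_le fun ρ => ?_
    rw [hρβ ρ]
    calc ‖(b:ℂ) + (c:ℂ) * ρ x‖
        ≤ ‖(b:ℂ)‖ + ‖(c:ℂ) * ρ x‖ := norm_add_le _ _
      _ = |(b:ℝ)| + |(c:ℝ)| * ‖ρ x‖ := by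
          rw [norm_mul, Complex.norm_intCast, Complex.norm_intCast]
      _ ≤ |(b:ℝ)| + |(c:ℝ)| * height F x := by
          have := aux_le_height x ρ
          have h0 : (0:ℝ) ≤ |(c:ℝ)| := abs_nonneg _
          nlinarith
  -- quadratic bound on |b|
  have hc2 : (1:ℝ) ≤ (c:ℝ)^2 := by
    have h1 : (1:ℝ) ≤ |(c:ℝ)| := by
      rw [← Int.cast_abs]
      exact_mod_cast Int.one_le_abs hc
    nlinarith [sq_abs ((c:ℝ))]
  have hb2 : |(b:ℝ)|^2 ≤ (|T| * |(c:ℝ)|) * |(b:ℝ)| + ((|Nn|+1) * ((c:ℝ)^2 * |NB|)) := by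
    rw [sq_abs]
    have habs1 : -(|T| * |(b:ℝ)| * |(c:ℝ)|) ≤ T * (b:ℝ) * (c:ℝ) := by
      have := neg_abs_le (T * (b:ℝ) * (c:ℝ))
      rwa [abs_mul, abs_mul] at this
    have habs2 : -(|Nn| * (c:ℝ)^2) ≤ Nn * (c:ℝ)^2 := by
      have := neg_abs_le (Nn * (c:ℝ)^2)
      rwa [abs_mul, abs_of_nonneg (sq_nonneg ((c:ℝ)))] at this
    have hNBle : NB ≤ |NB| := le_abs_self NB
    have e1 : |NB| ≤ (c:ℝ)^2 * |NB| := by nlinarith [abs_nonneg NB]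
    have e2 : |Nn| * (c:ℝ)^2 ≤ |Nn| * ((c:ℝ)^2 * |NB|) := by
      nlinarith [abs_nonneg Nn, mul_nonneg (abs_nonneg Nn) (sq_nonneg ((c:ℝ)))]
    nlinarith [abs_nonneg T, abs_nonneg (b:ℝ), abs_nonneg (c:ℝ)]
  have hbb : |(b:ℝ)| ≤ ((|T| * |(c:ℝ)|) + Real.sqrt ((|T| * |(c:ℝ)|)^2
      + 4*((|Nn|+1) * ((c:ℝ)^2 * |NB|)))) / 2 :=
    quadlem (by positivity) hb2
  set S : ℝ := Real.sqrt (T^2 + 4*(|Nn|+1)) with hSdef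
  set K : ℝ := |(c:ℝ)| * Real.sqrt |NB| with hKdef
  have hsqNB : Real.sqrt |NB| ^ 2 = |NB| := Real.sq_sqrt (abs_nonneg _)
  have hS2 : S^2 = T^2 + 4*(|Nn|+1) := Real.sq_sqrt (by positivity)
  have h1sq : (1:ℝ) ≤ Real.sqrt |NB| := by
    rw [show (1:ℝ) = Real.sqrt 1 by simp]
    exact Real.sqrt_le_sqrt hNb1
  have hsqn : 0 ≤ Real.sqrt |NB| := Real.sqrt_nonneg _
  have hSn : 0 ≤ S := Real.sqrt_nonneg _
  have hK0 : (0:ℝ) ≤ K := by rw [hKdef]; positivity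
  have hle : (|T| * |(c:ℝ)|)^2 + 4*((|Nn|+1) * ((c:ℝ)^2 * |NB|)) ≤ (K*S)^2 := by
    have hK2 : (K*S)^2 = ((c:ℝ)^2 * |NB|) * (T^2 + 4*(|Nn|+1)) := by
      have he : (K*S)^2 = K^2 * S^2 := by ring
      rw [he, hS2, hKdef, mul_pow, sq_abs, hsqNB]
    rw [hK2, mul_pow, sq_abs, sq_abs]
    have h7 : T^2*(c:ℝ)^2 ≤ T^2*(c:ℝ)^2*|NB| := le_mul_of_one_le_right (by positivity) hNb1
    linarith [h7]
  have hsqle : Real.sqrt ((|T| * |(c:ℝ)|)^2 + 4*((|Nn|+1) * ((c:ℝ)^2 * |NB|))) ≤ K * S := by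
    have h8 := Real.sqrt_le_sqrt hle
    rwa [Real.sqrt_sq (mul_nonneg hK0 hSn)] at h8
  have hcK : |(c:ℝ)| ≤ K := by
    rw [hKdef]
    exact le_mul_of_one_le_right (abs_nonneg _) h1sq
  have haK : |T| * |(c:ℝ)| ≤ |T| * K := mul_le_mul_of_nonneg_left hcK (abs_nonneg T)
  have hcH : |(c:ℝ)| * height F x ≤ K * height F x := mul_le_mul_of_nonneg_right hcK hH0
  have hbK : |(b:ℝ)| ≤ (|T| + S)/2 * K :=
    calc |(b:ℝ)| ≤ ((|T| * |(c:ℝ)|) + Real.sqrt ((|T| * |(c:ℝ)|)^2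
        + 4*((|Nn|+1) * ((c:ℝ)^2 * |NB|)))) / 2 := hbb
    _ ≤ ((|T| * K) + K * S)/2 := by linarith
    _ = (|T| + S)/2 * K := by ring
  calc height F β ≤ |(b:ℝ)| + |(c:ℝ)| * height F x := hhb
    _ ≤ (|T| + S)/2 * K + K * height F x := by linarith
    _ = (height F x + (|T| + S)/2) * |(c:ℝ)| * Real.sqrt |NB| := by rw [hKdef]; ring
end

section
/- Let f₁, ..., f_g ∈ ℚ̄[x,y,z] be homogeneous linear polynomials such that the projective lines {f_i = 0} meet the line at infinity {z = 0} in g pairwise distinct points. Then for any nonzero t ∈ ℚ̄, the homogeneous polynomial t·z^g + f₁·f₂·⋯·f_g is irreducible in ℚ̄[x,y,z]. -/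
open MvPolynomial

namespace Stmt13Aux


lemma finsupp_sum_eq_degree {σ : Type*} (m : σ →₀ ℕ) :
    (m.sum fun _ e => e) = Finsupp.degree m := by
  simp [Finsupp.sum, Finsupp.degree]
  rfl

lemma degree_add {σ : Type*} (u v : σ →₀ ℕ) :
    Finsupp.degree (u + v) = Finsupp.degree u + Finsupp.degree v := by
  simp [Finsupp.degree_eq_weight_one, map_add]

lemma coeff_eq_zero_of_totalDegree_lt' {R σ : Type*} [CommSemiring R]
    {p : MvPolynomial σ R} {m : σ →₀ ℕ} (h : p.totalDegree < Finsupp.degree m) :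
    coeff m p = 0 := by
  by_contra hc
  have hmem : m ∈ p.support := mem_support_iff.mpr hc
  have := le_totalDegree hmem
  rw [finsupp_sum_eq_degree] at this
  omega

lemma exists_degree_eq_totalDegree {R σ : Type*} [CommSemiring R]
    {p : MvPolynomial σ R} (hp : p ≠ 0) :
    ∃ m ∈ p.support, Finsupp.degree m = p.totalDegree := by
  obtain ⟨m, hm, hsup⟩ := Finset.exists_mem_eq_sup p.support
    (support_nonempty.mpr hp) (fun s => s.sum fun _ e => e)
  exact ⟨m, hm, by rw [← finsupp_sum_eq_degree, ← hsup]; rfl⟩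

theorem totalDegree_mul_eq {R σ : Type*} [CommRing R] [IsDomain R]
    {p q : MvPolynomial σ R} (hp : p ≠ 0) (hq : q ≠ 0) :
    (p * q).totalDegree = p.totalDegree + q.totalDegree := by
  classical
  refine le_antisymm (totalDegree_mul p q) ?_
  set dp := p.totalDegree
  set dq := q.totalDegree
  set P := homogeneousComponent dp p with hP
  set Q := homogeneousComponent dq q with hQ
  have hPne : P ≠ 0 := by
    obtain ⟨m, hm, hdeg⟩ := exists_degree_eq_totalDegree hp
    intro h0
    have := coeff_homogeneousComponent (n := dp) (φ := p) m
    rw [← hP, h0, if_pos hdeg] at this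
    exact (mem_support_iff.mp hm) this.symm
  have hQne : Q ≠ 0 := by
    obtain ⟨m, hm, hdeg⟩ := exists_degree_eq_totalDegree hq
    intro h0
    have := coeff_homogeneousComponent (n := dq) (φ := q) m
    rw [← hQ, h0, if_pos hdeg] at this
    exact (mem_support_iff.mp hm) this.symm
  have hPQhom : (P * Q).IsHomogeneous (dp + dq) :=
    (homogeneousComponent_isHomogeneous dp p).mul (homogeneousComponent_isHomogeneous dq q)
  have hPQne : P * Q ≠ 0 := mul_ne_zero hPne hQne
  obtain ⟨d, hd, _⟩ := exists_degree_eq_totalDegree hPQne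
  have hddeg : Finsupp.degree d = dp + dq := by
    by_contra hne
    exact mem_support_iff.mp hd (hPQhom.coeff_eq_zero (by
      simpa [Finsupp.degree] using hne))
  have hcoeff : coeff d (p * q) = coeff d (P * Q) := by
    rw [coeff_mul, coeff_mul]
    refine Finset.sum_congr rfl ?_
    rintro ⟨u, v⟩ huv
    dsimp only
    have huvd : u + v = d := (Finset.HasAntidiagonal.mem_antidiagonal.mp huv)
    have hsum : Finsupp.degree u + Finsupp.degree v = dp + dq := by
      rw [← degree_add, huvd, hddeg]
    by_cases hu : Finsupp.degree u = dp
    · have hv : Finsupp.degree v = dq := by omega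
      simp only [hP, hQ, coeff_homogeneousComponent, if_pos hu, if_pos hv]
    · rcases lt_or_gt_of_ne hu with hlt | hgt
      · have hv : dq < Finsupp.degree v := by omega
        rw [coeff_eq_zero_of_totalDegree_lt' hv, mul_zero,
          hQ, coeff_homogeneousComponent, if_neg (by omega), zero_mul]
      · rw [coeff_eq_zero_of_totalDegree_lt' hgt, zero_mul,
          hP, coeff_homogeneousComponent, if_neg (by omega), zero_mul]
  have hdmem : d ∈ (p * q).support := by
    rw [mem_support_iff, hcoeff]
    exact mem_support_iff.mp hd
  have := le_totalDegree hdmem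
  rw [finsupp_sum_eq_degree, hddeg] at this
  exact this


lemma finsupp_sum_eq_degreeB {σ : Type*} (m : σ →₀ ℕ) :
    (m.sum fun _ e => e) = Finsupp.degree m := by
  simp [Finsupp.sum, Finsupp.degree]
  rfl

theorem totalDegree_aeval_le {k σ τ : Type*} [CommSemiring k]
    (g : σ → MvPolynomial τ k) (hg : ∀ i, (g i).totalDegree ≤ 1)
    (p : MvPolynomial σ k) : (aeval g p).totalDegree ≤ p.totalDegree := by
  classical
  conv_lhs => rw [p.as_sum, map_sum]
  refine (totalDegree_finset_sum _ _).trans (Finset.sup_le ?_)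
  intro m hm
  rw [aeval_monomial]
  refine (totalDegree_mul _ _).trans ?_
  rw [algebraMap_eq, totalDegree_C, zero_add]
  refine (totalDegree_finset_prod _ _).trans ?_
  have hle : ∀ i ∈ m.support, (g i ^ m i).totalDegree ≤ m i := by
    intro i _
    refine (totalDegree_pow _ _).trans ?_
    calc m i * (g i).totalDegree ≤ m i * 1 := Nat.mul_le_mul_left _ (hg i)
    _ = m i := Nat.mul_one _
  refine (Finset.sum_le_sum hle).trans ?_
  have := le_totalDegree hm
  rw [finsupp_sum_eq_degreeB] at this
  exact this

theorem aeval_kill_monomial {k : Type*} {σ : Type*} [CommSemiring k] [DecidableEq σ]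
    (j : σ) (m : σ →₀ ℕ) (hm : m j = 0) (c : k) :
    aeval (fun i => if i = j then 0 else X i) (monomial m c) = monomial m c := by
  rw [aeval_monomial, monomial_eq, algebraMap_eq]
  congr 1
  refine Finsupp.prod_congr ?_
  intro i hi
  have hij : i ≠ j := by
    intro h; subst h
    exact (Finsupp.mem_support_iff.mp hi) hm
  rw [if_neg hij]

theorem X_dvd_of_aeval_eq_zero {k : Type*} {σ : Type*} [CommSemiring k] [DecidableEq σ]
    (j : σ) (p : MvPolynomial σ k)
    (h : aeval (fun i => if i = j then (0 : MvPolynomial σ k) else X i) p = 0) : X j ∣ p := by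
  classical
  set r := MvPolynomial.modMonomial p (Finsupp.single j 1) with hr
  have hsupr : ∀ m ∈ r.support, m j = 0 := by
    intro m hmem
    by_contra hmj
    have hle : Finsupp.single j 1 ≤ m := by
      rw [Finsupp.single_le_iff]; omega
    exact (Finsupp.mem_support_iff.mp hmem) (coeff_modMonomial_of_le p hle)
  have hfix : aeval (fun i => if i = j then (0 : MvPolynomial σ k) else X i) r = r := by
    conv_lhs => rw [r.as_sum, map_sum]
    conv_rhs => rw [r.as_sum]
    exact Finset.sum_congr rfl fun m hm => aeval_kill_monomial j m (hsupr m hm) _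
  have hdecomp := divMonomial_add_modMonomial p (Finsupp.single j 1)
  have hX : (monomial (Finsupp.single j 1) (1:k)) = X j := by
    rw [← X_pow_eq_monomial, pow_one]
  have hr0 : r = 0 := by
    have := congrArg (aeval (fun i => if i = j then (0 : MvPolynomial σ k) else X i)) hdecomp
    rw [map_add, map_mul, h, hX, ← hr] at this
    simp only [aeval_X, eq_self_iff_true, if_true, zero_mul, zero_add, hfix] at this
    exact this
  refine ⟨MvPolynomial.divMonomial p (Finsupp.single j 1), ?_⟩
  conv_lhs => rw [← hdecomp]
  rw [← hr, hr0, add_zero, hX]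

theorem eq_C_of_totalDegree_eq_zero {k : Type*} {σ : Type*} [CommSemiring k]
    {p : MvPolynomial σ k} (h : p.totalDegree = 0) : p = C (coeff 0 p) := by
  classical
  ext m
  by_cases hm : m = 0
  · subst hm; simp
  · rw [coeff_C, if_neg (Ne.symm hm)]
    by_contra hc
    have hmem : m ∈ p.support := mem_support_iff.mpr hc
    have := (totalDegree_eq_zero_iff _ p).mp h m hmem
    exact hm (Finsupp.ext this)

theorem exists_C_of_isUnit {k : Type*} {σ : Type*} [Field k]
    {p : MvPolynomial σ k} (h : IsUnit p) : ∃ c : k, c ≠ 0 ∧ p = C c := by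
  obtain ⟨q, hq⟩ := isUnit_iff_exists_inv.mp h
  have hp0 : p ≠ 0 := by rintro rfl; simp at hq
  have hq0 : q ≠ 0 := by rintro rfl; simp at hq
  have htd : p.totalDegree + q.totalDegree = 0 := by
    rw [← Stmt13Aux.totalDegree_mul_eq hp0 hq0, hq, totalDegree_one]
  have hp : p.totalDegree = 0 := by omega
  refine ⟨coeff 0 p, ?_, eq_C_of_totalDegree_eq_zero hp⟩
  intro h0
  rw [eq_C_of_totalDegree_eq_zero hp, h0, map_zero] at hp0
  exact hp0 rfl

theorem prime_X_fin3 {k : Type*} [CommRing k] [IsDomain k] (j : Fin 3) :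
    Prime (X j : MvPolynomial (Fin 3) k) := by
  have h0 : Prime (X 0 : MvPolynomial (Fin 3) k) := by
    rw [← MulEquiv.prime_iff (MvPolynomial.finSuccEquiv k 2).toMulEquiv]
    have : (MvPolynomial.finSuccEquiv k 2).toMulEquiv (X 0) = Polynomial.X := by
      show (MvPolynomial.finSuccEquiv k 2) (X 0) = Polynomial.X
      exact finSuccEquiv_X_zero
    rw [this]
    exact Polynomial.prime_X
  rw [← MulEquiv.prime_iff (renameEquiv k (Equiv.swap (0 : Fin 3) j)).toMulEquiv] at h0
  have : (renameEquiv k (Equiv.swap (0 : Fin 3) j)).toMulEquiv (X 0) = X j := by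
    show (renameEquiv k (Equiv.swap (0 : Fin 3) j)) (X 0) = X j
    rw [renameEquiv_apply, rename_X, Equiv.swap_apply_left]
  rwa [this] at h0




variable {K : Type*} [Field K]

noncomputable def lin (p q r : K) : MvPolynomial (Fin 3) K :=
  C p * X 0 + C q * X 1 + C r * X 2

lemma totalDegree_lin_le (p q r : K) : (lin p q r).totalDegree ≤ 1 := by
  refine (totalDegree_add _ _).trans (max_le ((totalDegree_add _ _).trans (max_le ?_ ?_)) ?_) <;>
  · refine (totalDegree_mul _ _).trans ?_
    simp [totalDegree_C, totalDegree_X]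

lemma lin_isHomogeneous (p q r : K) : (lin p q r).IsHomogeneous 1 :=
  ((isHomogeneous_C_mul_X p 0).add (isHomogeneous_C_mul_X q 1)).add (isHomogeneous_C_mul_X r 2)

lemma coeff_lin_x (p q r : K) : coeff (Finsupp.single 0 1) (lin p q r) = p := by
  simp [lin, coeff_X', Finsupp.single_eq_single_iff]

lemma coeff_lin_y (p q r : K) : coeff (Finsupp.single 1 1) (lin p q r) = q := by
  simp [lin, coeff_X', Finsupp.single_eq_single_iff]

variable (A B Cc u v : K)

noncomputable def af : MvPolynomial (Fin 3) K →ₐ[K] MvPolynomial (Fin 3) K :=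
  aeval ![lin A B Cc, lin u v 0, X 2]

noncomputable def ab : MvPolynomial (Fin 3) K →ₐ[K] MvPolynomial (Fin 3) K :=
  aeval ![lin v (-B) (-(v*Cc)), lin (-u) A (u*Cc), X 2]

variable {A B u v}

lemma comp_ab_af (huv : A * v - B * u = 1) :
    (ab A B Cc u v).comp (af A B Cc u v) = AlgHom.id K _ := by
  have hC : C A * C v - C B * C u = (1 : MvPolynomial (Fin 3) K) := by
    rw [← C_mul, ← C_mul, ← C_sub, huv, C_1]
  apply algHom_ext
  intro j
  fin_cases j <;>
    simp [af, ab, lin, algebraMap_eq, map_neg]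
  · linear_combination (X 0 - C Cc * X 2 : MvPolynomial (Fin 3) K) * hC
  · linear_combination (X 1 : MvPolynomial (Fin 3) K) * hC

lemma comp_af_ab (huv : A * v - B * u = 1) :
    (af A B Cc u v).comp (ab A B Cc u v) = AlgHom.id K _ := by
  have hC : C A * C v - C B * C u = (1 : MvPolynomial (Fin 3) K) := by
    rw [← C_mul, ← C_mul, ← C_sub, huv, C_1]
  apply algHom_ext
  intro j
  fin_cases j <;>
    simp [af, ab, lin, algebraMap_eq, map_neg]
  · linear_combination (X 0 : MvPolynomial (Fin 3) K) * hC
  · linear_combination (X 1 : MvPolynomial (Fin 3) K) * hC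

noncomputable def E (huv : A * v - B * u = 1) :
    MvPolynomial (Fin 3) K ≃ₐ[K] MvPolynomial (Fin 3) K :=
  AlgEquiv.ofAlgHom (af A B Cc u v) (ab A B Cc u v) (comp_af_ab Cc huv) (comp_ab_af Cc huv)

lemma prime_lin (huv : A * v - B * u = 1) : Prime (lin A B (0:K)) := by
  have h0 := prime_X_fin3 (k := K) 0
  rw [← MulEquiv.prime_iff (E (A := A) (B := B) 0 (u := u) (v := v) huv).toMulEquiv] at h0
  have : (E (A := A) (B := B) 0 (u := u) (v := v) huv).toMulEquiv (X 0) = lin A B 0 := by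
    show af A B 0 u v (X 0) = lin A B 0
    simp [af, aeval_X]
  rwa [this] at h0

section More
variable {K : Type*} [Field K] {A B u v : K} (Cc : K)

noncomputable def psi : MvPolynomial (Fin 3) K →ₐ[K] MvPolynomial (Fin 3) K :=
  aeval (fun j : Fin 3 => if j = 2 then 0 else X j)

noncomputable def ev0 : MvPolynomial (Fin 3) K →ₐ[K] MvPolynomial (Fin 3) K :=
  aeval (fun j : Fin 3 => if j = 0 then 0 else X j)

lemma psi_X2 : psi (X 2 : MvPolynomial (Fin 3) K) = 0 := by
  show aeval _ (X 2) = _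
  rw [aeval_X]
  exact if_pos rfl

lemma psi_X0 : psi (X 0 : MvPolynomial (Fin 3) K) = X 0 := by
  show aeval _ (X 0) = _
  rw [aeval_X]
  exact if_neg (by decide)

lemma ev0_X0 : ev0 (X 0 : MvPolynomial (Fin 3) K) = 0 := by
  show aeval _ (X 0) = _
  rw [aeval_X]
  exact if_pos rfl

lemma ev0_X2 : ev0 (X 2 : MvPolynomial (Fin 3) K) = X 2 := by
  show aeval _ (X 2) = _
  rw [aeval_X]
  exact if_neg (by decide)

lemma ev0_C (r : K) : ev0 (C r : MvPolynomial (Fin 3) K) = C r := by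
  show aeval _ (C r) = _
  rw [aeval_C, algebraMap_eq]

lemma psi_C (r : K) : psi (C r : MvPolynomial (Fin 3) K) = C r := by
  show aeval _ (C r) = _
  rw [aeval_C, algebraMap_eq]

lemma psi_lin (p q r : K) : psi (lin p q r) = lin p q 0 := by
  rw [lin, lin, map_add, map_add, map_mul, map_mul, map_mul, psi_C, psi_C, psi_C, psi_X2]
  have h0 : psi (X 0 : MvPolynomial (Fin 3) K) = X 0 := psi_X0
  have h1 : psi (X 1 : MvPolynomial (Fin 3) K) = X 1 := by
    show aeval _ (X 1) = _
    rw [aeval_X]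
    exact if_neg (by decide)
  rw [h0, h1, mul_zero, map_zero, zero_mul, add_zero]

lemma X_dvd_of_ev0_eq_zero {p : MvPolynomial (Fin 3) K} (h : ev0 p = 0) :
    (X 0 : MvPolynomial (Fin 3) K) ∣ p :=
  X_dvd_of_aeval_eq_zero 0 p h

lemma totalDegree_psi_le (p : MvPolynomial (Fin 3) K) :
    (psi p).totalDegree ≤ p.totalDegree := by
  refine totalDegree_aeval_le _ ?_ p
  intro j
  split
  · simp
  · simp [totalDegree_X]

lemma totalDegree_ev0_le (p : MvPolynomial (Fin 3) K) :
    (ev0 p).totalDegree ≤ p.totalDegree := by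
  refine totalDegree_aeval_le _ ?_ p
  intro j
  split
  · simp
  · simp [totalDegree_X]

lemma totalDegree_ab_le (p : MvPolynomial (Fin 3) K) :
    (ab A B Cc u v p).totalDegree ≤ p.totalDegree := by
  refine totalDegree_aeval_le _ ?_ p
  intro j
  fin_cases j
  · exact totalDegree_lin_le _ _ _
  · exact totalDegree_lin_le _ _ _
  · simp [totalDegree_X]

lemma af_X0 : af A B Cc u v (X 0) = lin A B Cc := by
  show aeval _ (X 0) = _
  rw [aeval_X]
  rfl

lemma ab_X2 : ab A B Cc u v (X 2) = X 2 := by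
  show aeval _ (X 2) = _
  rw [aeval_X]
  rfl

lemma ab_C (r : K) : ab A B Cc u v (C r) = C r := by
  show aeval _ (C r) = _
  rw [aeval_C, algebraMap_eq]

lemma ab_lin (huv : A * v - B * u = 1) : ab A B Cc u v (lin A B Cc) = X 0 := by
  have h := DFunLike.congr_fun (comp_ab_af Cc huv) (X 0 : MvPolynomial (Fin 3) K)
  rwa [AlgHom.comp_apply, AlgHom.id_apply, af_X0] at h

lemma af_ab_apply (huv : A * v - B * u = 1) (p : MvPolynomial (Fin 3) K) :
    af A B Cc u v (ab A B Cc u v p) = p := by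
  have h := DFunLike.congr_fun (comp_af_ab Cc huv) p
  rwa [AlgHom.comp_apply, AlgHom.id_apply] at h

lemma psi_comp_ab :
    ∀ p, psi (ab A B Cc u v p) = ab A B 0 u v (psi p) := by
  have h : (psi (K := K)).comp (ab A B Cc u v) = (ab A B 0 u v).comp psi := by
    apply algHom_ext
    intro j
    fin_cases j <;>
      simp [psi, ab, lin, algebraMap_eq, map_neg]
  intro p
  have := DFunLike.congr_fun h p
  rwa [AlgHom.comp_apply, AlgHom.comp_apply] at this

end More

end Stmt13Aux

open Stmt13Aux

/-- Let `f₁, …, f_g` be homogeneous linear polynomials in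
`x, y, z` over an algebraically closed field `k` of characteristic `0`,
`f i = aᵢ·x + bᵢ·y + cᵢ·z`, such that the projective lines `fᵢ = 0` meet the line
at infinity `z = 0` in `g` pairwise distinct points (i.e. no `fᵢ` is a multiple of
`z`, and the pairs `(aᵢ, bᵢ)` are pairwise non-proportional).  Then for any nonzero
`t ∈ k`, the polynomial `t·z^g + f₁⋯f_g` is irreducible. -/
theorem stmt13 (k : Type*) [Field k] [IsAlgClosed k] [CharZero k]
    (g : ℕ) (hg : 1 ≤ g) (a b cc : Fin g → k)
    (hinf : ∀ i, ¬ (a i = 0 ∧ b i = 0))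
    (hdist : ∀ i j, i ≠ j → a i * b j ≠ a j * b i)
    (t : k) (ht : t ≠ 0) :
    Irreducible (C t * (X 2 : MvPolynomial (Fin 3) k) ^ g +
      ∏ i : Fin g, (C (a i) * X 0 + C (b i) * X 1 + C (cc i) * X 2)) := by
  classical
  have huvex : ∀ i : Fin g, ∃ u w : k, a i * w - b i * u = 1 := by
    intro i
    by_cases h : a i = 0
    · have hb : b i ≠ 0 := by
        intro hb; exact hinf i ⟨h, hb⟩
      exact ⟨-(b i)⁻¹, 0, by field_simp [h]; ring⟩
    · exact ⟨0, (a i)⁻¹, by field_simp; ring⟩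
  choose uu vv huv using huvex
  set F : MvPolynomial (Fin 3) k := C t * (X 2 : MvPolynomial (Fin 3) k) ^ g +
      ∏ i : Fin g, (C (a i) * X 0 + C (b i) * X 1 + C (cc i) * X 2) with hFdef
  set l : Fin g → MvPolynomial (Fin 3) k := fun i => lin (a i) (b i) 0 with hldef
  set fl : Fin g → MvPolynomial (Fin 3) k := fun i => lin (a i) (b i) (cc i) with hfldef
  have hF2 : F = C t * X 2 ^ g + ∏ i : Fin g, fl i := rfl
  have hlprime : ∀ i, Prime (l i) := fun i => prime_lin (huv i)
  have hpsifl : ∀ i, psi (fl i) = l i := fun i => psi_lin _ _ _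
  have hpsiF : psi F = ∏ i, l i := by
    rw [hF2, map_add, map_mul, map_pow, map_prod, psi_X2, psi_C,
      zero_pow (by omega : g ≠ 0), mul_zero, zero_add]
    exact Finset.prod_congr rfl fun i _ => hpsifl i
  have hprodl_ne : (∏ i, l i) ≠ 0 :=
    Finset.prod_ne_zero_iff.mpr fun i _ => (hlprime i).ne_zero
  have hF0 : F ≠ 0 := by
    intro h
    rw [h, map_zero] at hpsiF
    exact hprodl_ne hpsiF.symm
  have hFtd : F.totalDegree ≤ g := by
    rw [hF2]
    refine (totalDegree_add _ _).trans (max_le ?_ ?_)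
    · refine (totalDegree_mul _ _).trans ?_
      simp [totalDegree_C, totalDegree_X_pow]
    · refine (totalDegree_finset_prod _ _).trans ?_
      calc (∑ i : Fin g, (fl i).totalDegree) ≤ ∑ _i : Fin g, 1 :=
            Finset.sum_le_sum fun i _ => totalDegree_lin_le _ _ _
        _ = g := by simp
  constructor
  · intro hu
    have h1 : IsUnit (psi F) := hu.map psi
    rw [hpsiF] at h1
    exact (hlprime ⟨0, hg⟩).not_unit
      (isUnit_of_dvd_unit (Finset.dvd_prod_of_mem l (Finset.mem_univ _)) h1)
  · intro G H hGH
    by_contra hcon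
    push_neg at hcon
    obtain ⟨hGu, hHu⟩ := hcon
    have hG0 : G ≠ 0 := by rintro rfl; rw [zero_mul] at hGH; exact hF0 hGH
    have hH0 : H ≠ 0 := by rintro rfl; rw [mul_zero] at hGH; exact hF0 hGH
    have htdsum : G.totalDegree + H.totalDegree = F.totalDegree := by
      rw [hGH]; exact (totalDegree_mul_eq hG0 hH0).symm
    have htdG1 : 1 ≤ G.totalDegree := by
      by_contra h
      push_neg at h
      interval_cases hG : G.totalDegree
      · have hGC := eq_C_of_totalDegree_eq_zero hG
        have : coeff 0 G ≠ 0 := by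
          intro h0; rw [h0, map_zero] at hGC; exact hG0 hGC
        exact hGu (by rw [hGC]; exact (isUnit_iff_ne_zero.mpr this).map C)
    have htdH1 : 1 ≤ H.totalDegree := by
      by_contra h
      push_neg at h
      interval_cases hH : H.totalDegree
      · have hHC := eq_C_of_totalDegree_eq_zero hH
        have : coeff 0 H ≠ 0 := by
          intro h0; rw [h0, map_zero] at hHC; exact hH0 hHC
        exact hHu (by rw [hHC]; exact (isUnit_iff_ne_zero.mpr this).map C)
    have hpsimul : psi G * psi H = ∏ i, l i := by
      rw [← map_mul, ← hGH, hpsiF]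
    have hpsiG0 : psi G ≠ 0 := by
      intro h
      rw [h, zero_mul] at hpsimul
      exact hprodl_ne hpsimul.symm
    -- key step
    have key : ∀ i, l i ∣ psi G := by
      intro i
      set β := ab (a i) (b i) (cc i) (uu i) (vv i) with hβ
      have hβfi : β (fl i) = X 0 := ab_lin (cc i) (huv i)
      have hev0βF : ev0 (β F) = C t * X 2 ^ g := by
        rw [hF2, map_add, map_add, map_mul, map_mul, map_pow, map_pow, ab_C, ev0_C,
          ab_X2, ev0_X2]
        rw [← Finset.mul_prod_erase Finset.univ fl (Finset.mem_univ i), map_mul, map_mul,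
          hβfi, ev0_X0, zero_mul, add_zero]
      have hAB : ev0 (β G) * ev0 (β H) = C t * X 2 ^ g := by
        rw [← map_mul, ← map_mul, ← hGH, hev0βF]
      have hAdvd : ev0 (β G) ∣ X 2 ^ g := by
        refine ⟨C t⁻¹ * ev0 (β H), ?_⟩
        calc X 2 ^ g = C t⁻¹ * (C t * X 2 ^ g) := by
              rw [← mul_assoc, ← C_mul, inv_mul_cancel₀ ht, C_1, one_mul]
          _ = C t⁻¹ * (ev0 (β G) * ev0 (β H)) := by rw [hAB]
          _ = ev0 (β G) * (C t⁻¹ * ev0 (β H)) := by ring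
      obtain ⟨m, hmle, hassoc⟩ := (dvd_prime_pow (prime_X_fin3 2) g).mp hAdvd
      obtain ⟨w, hw⟩ := hassoc
      obtain ⟨c, hc0, hcw⟩ := exists_C_of_isUnit w.isUnit
      have hAc : ev0 (β G) * C c = X 2 ^ m := by rw [← hcw]; exact hw
      have hAeq : ev0 (β G) = X 2 ^ m * C c⁻¹ := by
        calc ev0 (β G) = ev0 (β G) * (C c * C c⁻¹) := by
              rw [← C_mul, mul_inv_cancel₀ hc0, C_1, mul_one]
          _ = (ev0 (β G) * C c) * C c⁻¹ := by ring
          _ = X 2 ^ m * C c⁻¹ := by rw [hAc]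
      rcases Nat.eq_zero_or_pos m with hm0 | hm1
      · -- m = 0 : contradiction via degrees
        exfalso
        rw [hm0, pow_zero, one_mul] at hAeq
        have hBeq : ev0 (β H) = C (c * t) * X 2 ^ g := by
          calc ev0 (β H) = C c * (C c⁻¹ * ev0 (β H)) := by
                rw [← mul_assoc, ← C_mul, mul_inv_cancel₀ hc0, C_1, one_mul]
            _ = C c * (ev0 (β G) * ev0 (β H)) := by rw [hAeq]
            _ = C c * (C t * X 2 ^ g) := by rw [hAB]
            _ = C (c * t) * X 2 ^ g := by rw [← mul_assoc, ← C_mul]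
        have htdB : (ev0 (β H)).totalDegree = g := by
          rw [hBeq, totalDegree_mul_eq (by
              simp only [ne_eq, C_eq_zero]
              exact mul_ne_zero hc0 ht) (pow_ne_zero _ (X_ne_zero _)),
            totalDegree_C, totalDegree_X_pow, zero_add]
        have htdB_le : (ev0 (β H)).totalDegree ≤ H.totalDegree :=
          (totalDegree_ev0_le _).trans (totalDegree_ab_le _ _)
        omega
      · -- m ≥ 1
        have hev0diff : ev0 (β G - X 2 ^ m * C c⁻¹) = 0 := by
          rw [map_sub, hAeq, map_mul, map_pow, ev0_X2, ev0_C, sub_self]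
        have hXdvd : (X 0 : MvPolynomial (Fin 3) k) ∣ β G - X 2 ^ m * C c⁻¹ :=
          X_dvd_of_ev0_eq_zero hev0diff
        have hXdvd2 : (X 0 : MvPolynomial (Fin 3) k) ∣
            ab (a i) (b i) 0 (uu i) (vv i) (psi G) := by
          have h2 := map_dvd psi hXdvd
          rw [psi_X0, map_sub, map_mul, map_pow, psi_X2,
            zero_pow (by omega : m ≠ 0), zero_mul, sub_zero, hβ,
            psi_comp_ab] at h2
          exact h2
        have h3 := map_dvd (af (a i) (b i) 0 (uu i) (vv i)) hXdvd2
        rw [af_ab_apply 0 (huv i), af_X0] at h3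
        exact h3
    -- product of the l i divides psi G
    have prodl : (∏ i, l i) ∣ psi G := by
      have hs : ∀ s : Finset (Fin g), (∏ i ∈ s, l i) ∣ psi G := by
        intro s
        induction s using Finset.induction_on with
        | empty => simp only [Finset.prod_empty]; exact one_dvd _
        | insert j s hjs ih =>
          rw [Finset.prod_insert hjs]
          refine IsRelPrime.mul_dvd ?_ (key j) ih
          refine (hlprime j).irreducible.isRelPrime_iff_not_dvd.mpr ?_
          intro hdvd
          obtain ⟨i2, hi2s, hdvd2⟩ := ((hlprime j).dvd_finset_prod_iff _).mp hdvd
          have hne : i2 ≠ j := fun h => hjs (h ▸ hi2s)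
          obtain ⟨w2, hw2⟩ := (hlprime j).associated_of_dvd (hlprime i2) hdvd2
          obtain ⟨e, he0, hew⟩ := exists_C_of_isUnit w2.isUnit
          rw [hew] at hw2
          have hax : a i2 = e * a j := by
            have hcx := congrArg (coeff (Finsupp.single 0 1)) hw2
            rw [mul_comm, coeff_C_mul] at hcx
            rw [hldef] at hcx
            simp only [coeff_lin_x] at hcx
            exact hcx.symm
          have hbx : b i2 = e * b j := by
            have hcx := congrArg (coeff (Finsupp.single 1 1)) hw2
            rw [mul_comm, coeff_C_mul] at hcx
            rw [hldef] at hcx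
            simp only [coeff_lin_y] at hcx
            exact hcx.symm
          exact hdist i2 j hne (by rw [hax, hbx]; ring)
      exact hs Finset.univ
    obtain ⟨W, hW⟩ := prodl
    have hW0 : W ≠ 0 := by rintro rfl; rw [mul_zero] at hW; exact hpsiG0 hW
    have hprodtd : (∏ i, l i).totalDegree = g := by
      have hhom : (∏ i, l i).IsHomogeneous g := by
        have := MvPolynomial.IsHomogeneous.prod Finset.univ l (fun _ => 1)
          (fun i _ => lin_isHomogeneous (a i) (b i) 0)
        simp only [Finset.sum_const, Finset.card_univ, Fintype.card_fin, smul_eq_mul,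
          mul_one] at this
        exact this
      exact hhom.totalDegree hprodl_ne
    have hgle : g ≤ (psi G).totalDegree := by
      rw [hW, totalDegree_mul_eq hprodl_ne hW0, hprodtd]
      omega
    have hpsile : (psi G).totalDegree ≤ G.totalDegree := totalDegree_psi_le _
    omega
end

section
/- Let A be a simple ordinary abelian variety over a finite field 𝔽_q, let π be a root of the characteristic polynomial of its Frobenius endomorphism, and K = ℚ(π). Then the isogeny class of A over 𝔽_q contains exactly one isomorphism class if and only if π is a Weil generator for K (i.e., ℤ[π, π̄] = O_K) and K has class number 1. -/
open NumberField

/-- Let `A` be a simple ordinary abelian variety over `𝔽_q`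
(`q = p^a`), with Frobenius Weil `q`-number `π` generating the CM field `K = ℚ(π)`
(complex conjugation `c`).  The isogeny class of `A` is modelled, following
Honda–Tate and Waterhouse, by the type `Isog` of `𝔽_q`-isomorphism classes in the
isogeny class together with the map `EndRing` recording endomorphism rings:
the endomorphism rings occurring are exactly the orders of `K` containing
`ℤ[π, π̄]`, and the classes with endomorphism ring `𝓞 K` form a principal
homogeneous space under the class group of `K` (so their number is `# Cl(K)`).
Then the isogeny class of `A` contains exactly one isomorphism class if and only if
`π` is a Weil generator for `K` and `K` has class number `1`. -/
theorem stmt16 (p a : ℕ) (hp : p.Prime) (ha : 0 < a) (q : ℕ) (hq : q = p ^ a)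
    (K : Type*) [Field K] [NumberField K]
    (c : K ≃+* K) (hc : ∀ φ : K →+* ℂ, ∀ x : K, φ (c x) = (starRingEnd ℂ) (φ x))
    (π : K) (hint : IsIntegral ℤ π) (hπq : π * c π = (q : K))
    (hgen : IntermediateField.adjoin ℚ ({π} : Set K) = ⊤)
    -- ordinarity: `π + π̄` is coprime to `q` in `𝓞 K`
    (hord : ∃ x y : K, IsIntegral ℤ x ∧ IsIntegral ℤ y ∧
      (π + c π) * x + (q : K) * y = 1)
    (Isog : Type*) (EndRing : Isog → Subalgebra ℤ K)
    (hEnd : ∀ O : Subalgebra ℤ K,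
      (Algebra.adjoin ℤ ({π, c π} : Set K) ≤ O ∧ O ≤ integralClosure ℤ K) ↔
        ∃ A : Isog, EndRing A = O)
    (htorsor : Nat.card {A : Isog // EndRing A = integralClosure ℤ K} =
      Nat.card (ClassGroup (𝓞 K))) :
    Nat.card Isog = 1 ↔
      IsWeilGenerator K c π ∧ Nat.card (ClassGroup (𝓞 K)) = 1 :=
  by
  have hcint : IsIntegral ℤ (c π) := hint.map c.toRingHom.toIntAlgHom
  have hadj : Algebra.adjoin ℤ ({π, c π} : Set K) ≤ integralClosure ℤ K := by
    apply Algebra.adjoin_le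
    intro x hx
    rcases hx with rfl | rfl
    · exact hint
    · exact hcint
  constructor
  · intro h1
    obtain ⟨hsub, _⟩ := Nat.card_eq_one_iff_unique.mp h1
    obtain ⟨A1, hA1⟩ := (hEnd (Algebra.adjoin ℤ ({π, c π} : Set K))).mp
      ⟨le_refl _, hadj⟩
    obtain ⟨A2, hA2⟩ := (hEnd (integralClosure ℤ K)).mp ⟨hadj, le_refl _⟩
    have heq : Algebra.adjoin ℤ ({π, c π} : Set K) = integralClosure ℤ K := by
      rw [← hA1, ← hA2, Subsingleton.elim A1 A2]
    refine ⟨⟨hint, ⟨(q : ℤ), by push_cast; exact hπq⟩, heq⟩, ?_⟩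
    rw [← htorsor]
    exact Nat.card_eq_one_iff_unique.mpr ⟨inferInstance, ⟨⟨A2, hA2⟩⟩⟩
  · rintro ⟨⟨_, _, heq⟩, hcl⟩
    have hall : ∀ A : Isog, EndRing A = integralClosure ℤ K := by
      intro A
      obtain ⟨h1, h2⟩ := (hEnd (EndRing A)).mpr ⟨A, rfl⟩
      exact le_antisymm h2 (heq ▸ h1)
    have e : Isog ≃ {A : Isog // EndRing A = integralClosure ℤ K} :=
      (Equiv.subtypeUnivEquiv hall).symm
    rw [Nat.card_congr e, htorsor, hcl]
end

section
/- Let K be a CM field of degree 2g (g ≥ 2) with maximal totally real subfield F, and fix γ ∈ O_K with O_K = O_F[γ]. If α is a Weil generator for K, then α = (u(γ - γ̄) + η + a)/2 for a unique triple (u, η, a), where u ∈ O_F^×, a ∈ ℤ, and η ranges over a fixed set T of representatives (up to integer translation) of elements generating O_F over ℤ. Moreover u = (α - ᾱ)/(γ - γ̄). -/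
open NumberField

open Polynomial in
/-- If `x` satisfies `x² = y·x - n` with `n` from the base ring, then every element of
`adjoin R {y, x}` has the form `f(y) + g(y)·x`. -/
theorem quad_span {R S : Type*} [CommRing R] [CommRing S] [Algebra R S]
    (x y : S) (n : R) (hx : x * x = y * x - algebraMap R S n)
    {z : S} (hz : z ∈ Algebra.adjoin R ({y, x} : Set S)) :
    ∃ f g : R[X], z = aeval y f + aeval y g * x := by
  let A : Subalgebra R S :=
    { carrier := {z | ∃ f g : R[X], z = aeval y f + aeval y g * x}
      add_mem' := by
        rintro a b ⟨f₁, g₁, rfl⟩ ⟨f₂, g₂, rfl⟩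
        exact ⟨f₁ + f₂, g₁ + g₂, by simp only [map_add]; ring⟩
      mul_mem' := by
        rintro a b ⟨f₁, g₁, rfl⟩ ⟨f₂, g₂, rfl⟩
        refine ⟨f₁ * f₂ - C n * (g₁ * g₂), f₁ * g₂ + f₂ * g₁ + X * (g₁ * g₂), ?_⟩
        simp only [map_add, map_mul, map_sub, aeval_C, aeval_X]
        have h : aeval y g₁ * x * (aeval y g₂ * x) = aeval y g₁ * aeval y g₂ * (x * x) := by
          ring
        rw [mul_add, add_mul, add_mul, h, hx]
        ring
      algebraMap_mem' := fun r => ⟨C r, 0, by simp⟩ }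
  have hle : Algebra.adjoin R ({y, x} : Set S) ≤ A := by
    apply Algebra.adjoin_le
    rintro w (rfl | rfl)
    · exact ⟨X, 0, by simp⟩
    · exact ⟨0, 1, by simp⟩
  exact hle hz

/-- Let `K` be a CM field of degree `2g` (`g ≥ 2`) with maximal
totally real subfield `F`, complex conjugation `c`, and fix `γ ∈ 𝓞 K` with
`𝓞 K = 𝓞 F[γ]` and a set `T` of representatives, up to integer translation, of the
generators of `𝓞 F` over `ℤ`.  If `α` is a Weil generator for `K`, then
`α = (u(γ - γ̄) + η + a)/2` for a unique triple `(u, η, a)` with `u ∈ 𝓞 F ˣ`,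
`η ∈ T`, `a ∈ ℤ`; moreover `u = (α - ᾱ)/(γ - γ̄)`. -/
theorem stmt17 (g : ℕ) (hg : 2 ≤ g)
    (F K : Type*) [Field F] [Field K] [NumberField F] [NumberField K] [Algebra F K]
    (hF : TotallyReal F) (hK : TotallyImaginary K)
    (hgF : Module.finrank ℚ F = g) (h2 : Module.finrank F K = 2)
    (c : K ≃ₐ[F] K)
    (hc : ∀ φ : K →+* ℂ, ∀ x : K, φ (c x) = (starRingEnd ℂ) (φ x))
    (γ : 𝓞 K) (hγ : Algebra.adjoin (𝓞 F) ({γ} : Set (𝓞 K)) = ⊤)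
    (T : Set (𝓞 F))
    (hT1 : ∀ η ∈ T, Algebra.adjoin ℤ ({η} : Set (𝓞 F)) = ⊤)
    (hT2 : ∀ η' : 𝓞 F, Algebra.adjoin ℤ ({η'} : Set (𝓞 F)) = ⊤ →
      ∃! η : 𝓞 F, η ∈ T ∧ ∃ m : ℤ, η' - η = (m : 𝓞 F))
    (α : K) (hW : IsWeilGenerator K c.toRingEquiv α) :
    (∃! x : (𝓞 F)ˣ × 𝓞 F × ℤ, x.2.1 ∈ T ∧
      α = (algebraMap F K (algebraMap (𝓞 F) F (x.1 : 𝓞 F)) *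
            (algebraMap (𝓞 K) K γ - c (algebraMap (𝓞 K) K γ)) +
          algebraMap F K (algebraMap (𝓞 F) F x.2.1) + (x.2.2 : K)) / 2) ∧
    ∀ (u : (𝓞 F)ˣ) (η : 𝓞 F) (a : ℤ), η ∈ T →
      α = (algebraMap F K (algebraMap (𝓞 F) F (u : 𝓞 F)) *
            (algebraMap (𝓞 K) K γ - c (algebraMap (𝓞 K) K γ)) +
          algebraMap F K (algebraMap (𝓞 F) F η) + (a : K)) / 2 →
      algebraMap F K (algebraMap (𝓞 F) F (u : 𝓞 F)) =
        (α - c α) / (algebraMap (𝓞 K) K γ - c (algebraMap (𝓞 K) K γ)) := by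
  classical
  have hFKinj : Function.Injective (algebraMap F K) := (algebraMap F K).injective
  have htoFinj : Function.Injective (algebraMap (𝓞 F) F) := RingOfIntegers.coe_injective
  have htoKinj : Function.Injective (algebraMap (𝓞 K) K) := RingOfIntegers.coe_injective
  have htower : ∀ x : 𝓞 F, algebraMap (𝓞 K) K (algebraMap (𝓞 F) (𝓞 K) x)
      = algebraMap F K (algebraMap (𝓞 F) F x) := by
    intro x
    rw [← IsScalarTower.algebraMap_apply, ← IsScalarTower.algebraMap_apply]
  -- `c` is an involution
  have hcc : ∀ x : K, c (c x) = x := by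
    obtain ⟨φ⟩ := (inferInstance : Nonempty (K →+* ℂ))
    intro x
    apply φ.injective
    rw [hc φ (c x), hc φ x, starRingEnd_apply, starRingEnd_apply, star_star]
  -- `c` is not the identity
  have hne : ∃ x : K, c x ≠ x := by
    obtain ⟨φ⟩ := (inferInstance : Nonempty (K →+* ℂ))
    obtain ⟨x, hx⟩ := hK φ
    exact ⟨x, fun h => hx (by rw [← hc φ x, h])⟩
  -- if `c` fixes the image of every algebraic integer we get a contradiction
  have hfixOK : (∀ x : 𝓞 K, c (algebraMap (𝓞 K) K x) = algebraMap (𝓞 K) K x) → False := by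
    intro h
    obtain ⟨x₀, hx₀⟩ := hne
    obtain ⟨a, b, -, rfl⟩ := IsFractionRing.div_surjective (A := 𝓞 K) x₀
    exact hx₀ (by rw [map_div₀, h, h])
  -- `c` moves `γ`
  have hγcne : c (algebraMap (𝓞 K) K γ) ≠ algebraMap (𝓞 K) K γ := by
    intro h
    apply hfixOK
    intro x
    have hx : x ∈ Algebra.adjoin (𝓞 F) ({γ} : Set (𝓞 K)) := by rw [hγ]; trivial
    refine Algebra.adjoin_induction (p := fun z _ => c (algebraMap (𝓞 K) K z)
        = algebraMap (𝓞 K) K z) ?_ ?_ ?_ ?_ hx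
    · rintro w rfl
      exact h
    · intro r
      rw [htower]
      exact c.commutes (algebraMap (𝓞 F) F r)
    · intro a b _ _ ha hb
      rw [map_add, map_add, ha, hb]
    · intro a b _ _ ha hb
      rw [map_mul, map_mul, ha, hb]
  -- `γ` is not in the image of `F`
  have hγnr : algebraMap (𝓞 K) K γ ∉ Set.range (algebraMap F K) := by
    rintro ⟨w, hw⟩
    exact hγcne (by rw [← hw]; exact c.commutes w)
  -- `α` is integral, `c α` is integral
  have hαint : IsIntegral ℤ α := hW.1
  have hαcint : IsIntegral ℤ (c α) := hαint.map ((c : K →ₐ[F] K).restrictScalars ℤ)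
  have hWadj : Algebra.adjoin ℤ ({α, c α} : Set K) = integralClosure ℤ K := hW.2.2
  -- `α` is not in the image of `F`
  have hanr : α ∉ Set.range (algebraMap F K) := by
    rintro ⟨w, hw⟩
    have hfixα : c α = α := by rw [← hw]; exact c.commutes w
    apply hfixOK
    intro x
    have hx : algebraMap (𝓞 K) K x ∈ Algebra.adjoin ℤ ({α, c α} : Set K) := by
      rw [hWadj]
      exact RingOfIntegers.isIntegral_coe x
    refine Algebra.adjoin_induction (p := fun z _ => c z = z) ?_ ?_ ?_ ?_ hx
    · rintro w (rfl | rfl)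
      · exact hfixα
      · rw [hfixα]; exact hfixα
    · intro r
      simp only [algebraMap_int_eq, eq_intCast, map_intCast]
    · intro a b _ _ ha hb
      rw [map_add, ha, hb]
    · intro a b _ _ ha hb
      rw [map_mul, ha, hb]
  -- elements fixed by `c` lie in the image of `F`
  have hrange : ∀ z : K, c z = z → z ∈ Set.range (algebraMap F K) := by
    intro z hz
    by_contra hnr
    have hFD : FiniteDimensional F K := FiniteDimensional.of_finrank_pos (by rw [h2]; norm_num)
    have hli : LinearIndependent F ![(1 : K), z] := by
      rw [LinearIndependent.pair_iff]
      intro s t hst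
      rw [Algebra.smul_def, Algebra.smul_def, mul_one] at hst
      by_cases ht : t = 0
      · subst ht
        rw [map_zero, zero_mul, add_zero] at hst
        exact ⟨hFKinj (by rw [hst, map_zero]), rfl⟩
      · exfalso
        apply hnr
        have h1 : algebraMap F K t ≠ 0 := fun h0 => ht (hFKinj (by rw [h0, map_zero]))
        refine ⟨-s / t, ?_⟩
        rw [map_div₀, map_neg, div_eq_iff h1]
        linear_combination -hst
    have hsp : Submodule.span F (Set.range ![(1 : K), z]) = ⊤ :=
      hli.span_eq_top_of_card_eq_finrank (by rw [h2]; simp)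
    obtain ⟨x₀, hx₀⟩ := hne
    apply hx₀
    have hx : x₀ ∈ Submodule.span F ({(1 : K), z} : Set K) := by
      have : Set.range ![(1 : K), z] = {(1 : K), z} := by
        simp only [Matrix.range_cons, Matrix.range_empty, Set.union_empty,
          Set.union_singleton]
        exact Set.pair_comm z 1
      rw [← this, hsp]
      trivial
    obtain ⟨a, b, hab⟩ := Submodule.mem_span_pair.mp hx
    rw [← hab]
    rw [Algebra.smul_def, Algebra.smul_def, mul_one]
    rw [map_add, map_mul, c.commutes, c.commutes, hz]
  -- linear independence of `1, w` for `w` outside the image of `F`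
  have indep : ∀ w : K, w ∉ Set.range (algebraMap F K) → ∀ a b a' b' : F,
      algebraMap F K a + algebraMap F K b * w
        = algebraMap F K a' + algebraMap F K b' * w → a = a' ∧ b = b' := by
    intro w hw a b a' b' h
    by_cases hbb : b = b'
    · subst hbb
      refine ⟨hFKinj ?_, rfl⟩
      have := add_right_cancel h
      exact this
    · exfalso
      apply hw
      have h1 : algebraMap F K (b - b') ≠ 0 := by
        rw [map_sub, sub_ne_zero]
        exact fun h0 => hbb (hFKinj h0)
      refine ⟨(a' - a) / (b - b'), ?_⟩
      rw [map_div₀, div_eq_iff h1, map_sub, map_sub]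
      linear_combination -h
  -- ### Stage 2: integral data
  obtain ⟨n, hn'⟩ := hW.2.1
  have hn : α * c α = (n : K) := hn'
  set γK := algebraMap (𝓞 K) K γ with hγK
  have hγKint : IsIntegral ℤ γK := RingOfIntegers.isIntegral_coe γ
  have hγcKint : IsIntegral ℤ (c γK) := hγKint.map ((c : K →ₐ[F] K).restrictScalars ℤ)
  -- β = α + c α descends to 𝓞 F
  obtain ⟨b₁, hb₁⟩ := hrange (α + c α) (by rw [map_add, hcc]; ring)
  have hb₁int : IsIntegral ℤ b₁ :=
    (isIntegral_algebraMap_iff hFKinj).mp (by rw [hb₁]; exact hαint.add hαcint)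
  set b₀ : 𝓞 F := ⟨b₁, hb₁int⟩ with hb₀def
  have hbK : algebraMap F K (algebraMap (𝓞 F) F b₀) = α + c α := hb₁
  -- trace and norm of γ descend to 𝓞 F
  obtain ⟨p₁, hp₁⟩ := hrange (γK + c γK) (by rw [map_add, hcc]; ring)
  obtain ⟨q₁, hq₁⟩ := hrange (γK * c γK) (by rw [map_mul, hcc]; ring)
  have hp₁int : IsIntegral ℤ p₁ :=
    (isIntegral_algebraMap_iff hFKinj).mp (by rw [hp₁]; exact hγKint.add hγcKint)
  have hq₁int : IsIntegral ℤ q₁ :=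
    (isIntegral_algebraMap_iff hFKinj).mp (by rw [hq₁]; exact hγKint.mul hγcKint)
  set p₀ : 𝓞 F := ⟨p₁, hp₁int⟩ with hp₀def
  set q₀ : 𝓞 F := ⟨q₁, hq₁int⟩ with hq₀def
  have hpK : algebraMap F K (algebraMap (𝓞 F) F p₀) = γK + c γK := hp₁
  have hqK : algebraMap F K (algebraMap (𝓞 F) F q₀) = γK * c γK := hq₁
  -- quadratic relation for γ over 𝓞 F
  have hrelγ : γ * γ = algebraMap (𝓞 F) (𝓞 K) p₀ * γ - algebraMap (𝓞 F) (𝓞 K) q₀ := by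
    apply htoKinj
    rw [map_mul, map_sub, map_mul, htower, htower, hpK, hqK, ← hγK]
    ring
  -- decomposition of 𝓞 K as 𝓞 F + 𝓞 F γ
  have decomp : ∀ z : 𝓞 K, ∃ s t : 𝓞 F,
      z = algebraMap (𝓞 F) (𝓞 K) s + algebraMap (𝓞 F) (𝓞 K) t * γ := by
    intro z
    have hz0 : z ∈ (⊤ : Subalgebra (𝓞 F) (𝓞 K)) := trivial
    rw [← hγ] at hz0
    have hz : z ∈ Algebra.adjoin (𝓞 F)
        ({algebraMap (𝓞 F) (𝓞 K) p₀, γ} : Set (𝓞 K)) :=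
      Algebra.adjoin_mono (Set.singleton_subset_iff.mpr (by simp)) hz0
    obtain ⟨f, g', hfg⟩ := quad_span γ _ q₀ hrelγ hz
    exact ⟨f.eval p₀, g'.eval p₀, by
      rw [hfg, Polynomial.aeval_algebraMap_apply_eq_algebraMap_eval,
        Polynomial.aeval_algebraMap_apply_eq_algebraMap_eval]⟩
  -- decompose α
  set α₀ : 𝓞 K := ⟨α, hW.1⟩ with hα₀def
  set αc₀ : 𝓞 K := ⟨c α, hαcint⟩ with hαc₀def
  have hα₀K : algebraMap (𝓞 K) K α₀ = α := rfl
  have hαc₀K : algebraMap (𝓞 K) K αc₀ = c α := rfl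
  obtain ⟨s, t, hst⟩ := decomp α₀
  have hstK : α = algebraMap F K (algebraMap (𝓞 F) F s)
      + algebraMap F K (algebraMap (𝓞 F) F t) * γK := by
    have h0 := congrArg (algebraMap (𝓞 K) K) hst
    rw [map_add, map_mul, htower, htower, ← hγK, hα₀K] at h0
    exact h0
  -- adjoin of α and its conjugate in 𝓞 K is everything
  have hOK : Algebra.adjoin ℤ ({α₀, αc₀} : Set (𝓞 K)) = ⊤ := by
    rw [eq_top_iff]
    intro z _
    have hz : algebraMap (𝓞 K) K z ∈ Algebra.adjoin ℤ
        ((algebraMap (𝓞 K) K) '' ({α₀, αc₀} : Set (𝓞 K))) := by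
      have himg : (algebraMap (𝓞 K) K) '' ({α₀, αc₀} : Set (𝓞 K)) = {α, c α} := by
        rw [Set.image_insert_eq, Set.image_singleton, hα₀K, hαc₀K]
      rw [himg, hWadj]
      exact RingOfIntegers.isIntegral_coe z
    rw [← IsScalarTower.coe_toAlgHom' ℤ (𝓞 K) K,
      ← AlgHom.map_adjoin (IsScalarTower.toAlgHom ℤ (𝓞 K) K)] at hz
    obtain ⟨w, hw, hwz⟩ := hz
    rwa [show w = z from htoKinj hwz] at hw
  have hαc₀eq : αc₀ = algebraMap (𝓞 F) (𝓞 K) b₀ - α₀ := by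
    apply htoKinj
    rw [map_sub, htower, hαc₀K, hα₀K, hbK]
    ring
  -- quadratic relation for α over 𝓞 F
  have hnOF : algebraMap F K (algebraMap (𝓞 F) F ((n : 𝓞 F))) = (n : K) := by
    rw [map_intCast, map_intCast]
  have hrelα : α₀ * α₀ = algebraMap (𝓞 F) (𝓞 K) b₀ * α₀
      - algebraMap (𝓞 F) (𝓞 K) ((n : 𝓞 F)) := by
    apply htoKinj
    rw [map_mul, map_sub, map_mul, htower, htower, hα₀K, hbK, hnOF]
    linear_combination -hn
  have hrelαZ : α₀ * α₀ = algebraMap (𝓞 F) (𝓞 K) b₀ * α₀ - algebraMap ℤ (𝓞 K) n := by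
    rw [show algebraMap ℤ (𝓞 K) n = algebraMap (𝓞 F) (𝓞 K) ((n : 𝓞 F)) by simp]
    exact hrelα
  -- adjoin over 𝓞 F of b₀ and α₀ is everything
  have hOF : Algebra.adjoin (𝓞 F)
      ({algebraMap (𝓞 F) (𝓞 K) b₀, α₀} : Set (𝓞 K)) = ⊤ := by
    rw [eq_top_iff]
    intro z _
    have hz : z ∈ Algebra.adjoin ℤ ({α₀, αc₀} : Set (𝓞 K)) := by rw [hOK]; trivial
    refine Algebra.adjoin_induction (p := fun w _ => w ∈ Algebra.adjoin (𝓞 F)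
      ({algebraMap (𝓞 F) (𝓞 K) b₀, α₀} : Set (𝓞 K))) ?_ ?_ ?_ ?_ hz
    · rintro w (rfl | rfl)
      · exact Algebra.subset_adjoin (by simp)
      · rw [hαc₀eq]
        exact sub_mem (Algebra.subset_adjoin (by simp)) (Algebra.subset_adjoin (by simp))
    · intro r
      rw [IsScalarTower.algebraMap_apply ℤ (𝓞 F) (𝓞 K)]
      exact Subalgebra.algebraMap_mem _ _
    · intro a b _ _ ha hb
      exact add_mem ha hb
    · intro a b _ _ ha hb
      exact mul_mem ha hb
  -- γ in terms of α₀ : the coefficient t is a unit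
  obtain ⟨f₂, g₂, hγdec⟩ := quad_span (z := γ) α₀ (algebraMap (𝓞 F) (𝓞 K) b₀)
    ((n : 𝓞 F)) hrelα (by rw [hOF]; trivial)
  have hγdec' : γ = algebraMap (𝓞 F) (𝓞 K) (f₂.eval b₀ + g₂.eval b₀ * s)
      + algebraMap (𝓞 F) (𝓞 K) (g₂.eval b₀ * t) * γ := by
    have h0 := hγdec
    rw [Polynomial.aeval_algebraMap_apply_eq_algebraMap_eval,
      Polynomial.aeval_algebraMap_apply_eq_algebraMap_eval, hst] at h0
    simp only [map_add, map_mul]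
    linear_combination h0
  have hγdecK : algebraMap F K (algebraMap (𝓞 F) F 0)
      + algebraMap F K (algebraMap (𝓞 F) F 1) * γK
      = algebraMap F K (algebraMap (𝓞 F) F (f₂.eval b₀ + g₂.eval b₀ * s))
      + algebraMap F K (algebraMap (𝓞 F) F (g₂.eval b₀ * t)) * γK := by
    have h0 := congrArg (algebraMap (𝓞 K) K) hγdec'
    rw [map_add, map_mul, htower, htower, ← hγK] at h0
    rw [map_zero, map_zero, map_one, map_one, zero_add, one_mul]
    exact h0
  have hunit : g₂.eval b₀ * t = 1 :=
    (htoFinj (indep γK hγnr _ _ _ _ hγdecK).2).symm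
  -- ℤ-adjoin version
  have hOKZ : Algebra.adjoin ℤ ({algebraMap (𝓞 F) (𝓞 K) b₀, α₀} : Set (𝓞 K)) = ⊤ := by
    rw [eq_top_iff]
    intro z _
    have hz : z ∈ Algebra.adjoin ℤ ({α₀, αc₀} : Set (𝓞 K)) := by rw [hOK]; trivial
    refine Algebra.adjoin_induction (p := fun w _ => w ∈ Algebra.adjoin ℤ
      ({algebraMap (𝓞 F) (𝓞 K) b₀, α₀} : Set (𝓞 K))) ?_ ?_ ?_ ?_ hz
    · rintro w (rfl | rfl)
      · exact Algebra.subset_adjoin (by simp)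
      · rw [hαc₀eq]
        exact sub_mem (Algebra.subset_adjoin (by simp)) (Algebra.subset_adjoin (by simp))
    · intro r
      exact Subalgebra.algebraMap_mem _ _
    · intro a b _ _ ha hb
      exact add_mem ha hb
    · intro a b _ _ ha hb
      exact mul_mem ha hb
  -- transfer of `aeval` along the tower
  have haeval : ∀ h : Polynomial ℤ,
      algebraMap (𝓞 K) K (Polynomial.aeval (algebraMap (𝓞 F) (𝓞 K) b₀) h)
      = algebraMap F K (algebraMap (𝓞 F) F (Polynomial.aeval b₀ h)) := by
    intro h
    calc algebraMap (𝓞 K) K (Polynomial.aeval (algebraMap (𝓞 F) (𝓞 K) b₀) h)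
        = (IsScalarTower.toAlgHom ℤ (𝓞 K) K)
            (Polynomial.aeval (algebraMap (𝓞 F) (𝓞 K) b₀) h) := rfl
      _ = Polynomial.aeval
            ((IsScalarTower.toAlgHom ℤ (𝓞 K) K) (algebraMap (𝓞 F) (𝓞 K) b₀)) h :=
          (Polynomial.aeval_algHom_apply _ _ _).symm
      _ = Polynomial.aeval ((IsScalarTower.toAlgHom ℤ F K) (algebraMap (𝓞 F) F b₀)) h := by
          rw [show (IsScalarTower.toAlgHom ℤ (𝓞 K) K) (algebraMap (𝓞 F) (𝓞 K) b₀)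
            = algebraMap (𝓞 K) K (algebraMap (𝓞 F) (𝓞 K) b₀) from rfl, htower]
          rfl
      _ = (IsScalarTower.toAlgHom ℤ F K) (Polynomial.aeval (algebraMap (𝓞 F) F b₀) h) :=
          Polynomial.aeval_algHom_apply _ _ _
      _ = (IsScalarTower.toAlgHom ℤ F K)
            (Polynomial.aeval ((IsScalarTower.toAlgHom ℤ (𝓞 F) F) b₀) h) := rfl
      _ = (IsScalarTower.toAlgHom ℤ F K)
            ((IsScalarTower.toAlgHom ℤ (𝓞 F) F) (Polynomial.aeval b₀ h)) := by
          rw [Polynomial.aeval_algHom_apply]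
      _ = algebraMap F K (algebraMap (𝓞 F) F (Polynomial.aeval b₀ h)) := rfl
  -- b₀ generates 𝓞 F over ℤ
  have hbgen : Algebra.adjoin ℤ ({b₀} : Set (𝓞 F)) = ⊤ := by
    rw [eq_top_iff]
    intro y _
    obtain ⟨f₃, g₃, hy⟩ := quad_span (z := algebraMap (𝓞 F) (𝓞 K) y) α₀
      (algebraMap (𝓞 F) (𝓞 K) b₀) n hrelαZ (by rw [hOKZ]; trivial)
    have hyK := congrArg (algebraMap (𝓞 K) K) hy
    rw [map_add, map_mul, haeval, haeval, htower, hα₀K] at hyK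
    have hyK' : algebraMap F K (algebraMap (𝓞 F) F y)
        + algebraMap F K (algebraMap (𝓞 F) F 0) * α
        = algebraMap F K (algebraMap (𝓞 F) F (Polynomial.aeval b₀ f₃))
        + algebraMap F K (algebraMap (𝓞 F) F (Polynomial.aeval b₀ g₃)) * α := by
      rw [map_zero, map_zero, zero_mul, add_zero]
      exact hyK
    have h2' : y = Polynomial.aeval b₀ f₃ := htoFinj (indep α hanr _ _ _ _ hyK').1
    rw [h2', Algebra.adjoin_singleton_eq_range_aeval]
    exact ⟨f₃, rfl⟩
  -- representative from T
  obtain ⟨η₀, ⟨hη₀T, m₀, hm₀⟩, huniq⟩ := hT2 b₀ hbgen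
  -- auxiliary facts for the algebraic manipulations
  have hγd : γK - c γK ≠ 0 := sub_ne_zero.mpr (fun h => hγcne h.symm)
  have hcFK : ∀ w : F, c (algebraMap F K w) = algebraMap F K w := c.commutes
  have hcast : ∀ m : ℤ, algebraMap F K (algebraMap (𝓞 F) F ((m : 𝓞 F))) = (m : K) := by
    intro m
    rw [map_intCast, map_intCast]
  have hcα : c α = algebraMap F K (algebraMap (𝓞 F) F s)
      + algebraMap F K (algebraMap (𝓞 F) F t) * c γK := by
    rw [hstK, map_add, map_mul, hcFK, hcFK]
  -- the key computation
  have hkey : ∀ (u' : 𝓞 F) (η' : 𝓞 F) (a' : ℤ),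
      α = (algebraMap F K (algebraMap (𝓞 F) F u') * (γK - c γK)
        + algebraMap F K (algebraMap (𝓞 F) F η') + (a' : K)) / 2 →
      (α - c α = algebraMap F K (algebraMap (𝓞 F) F u') * (γK - c γK)) ∧
      α * 2 = algebraMap F K (algebraMap (𝓞 F) F u') * (γK - c γK)
        + algebraMap F K (algebraMap (𝓞 F) F η') + (a' : K) := by
    intro u' η' a' heq
    rw [eq_div_iff (two_ne_zero)] at heq
    have hceq := congrArg c heq
    rw [map_mul, map_add, map_add, map_mul, map_sub, hcc, map_ofNat, map_intCast,
      hcFK, hcFK] at hceq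
    refine ⟨?_, heq⟩
    have h3 : (α - c α) * 2
        = (algebraMap F K (algebraMap (𝓞 F) F u') * (γK - c γK)) * 2 := by
      linear_combination heq - hceq
    exact mul_right_cancel₀ two_ne_zero h3
  -- b₀ in terms of s, t
  have hb₀eq : b₀ = 2 * s + t * p₀ := by
    refine htoFinj (hFKinj ?_)
    rw [hbK]
    simp only [map_add, map_mul, map_ofNat]
    rw [hpK]
    linear_combination hstK + hcα
  -- the existence equation
  have hexist_eq : α = (algebraMap F K (algebraMap (𝓞 F) F t) * (γK - c γK)
      + algebraMap F K (algebraMap (𝓞 F) F η₀) + (m₀ : K)) / 2 := by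
    rw [eq_div_iff (two_ne_zero)]
    have he2 : algebraMap F K (algebraMap (𝓞 F) F η₀) + (m₀ : K)
        = algebraMap F K (algebraMap (𝓞 F) F b₀) := by
      have h7 : η₀ + ((m₀ : ℤ) : 𝓞 F) = b₀ := by rw [← hm₀]; ring
      rw [← hcast m₀, ← map_add, ← map_add, h7]
    have he1 : algebraMap F K (algebraMap (𝓞 F) F b₀)
        = 2 * algebraMap F K (algebraMap (𝓞 F) F s)
        + algebraMap F K (algebraMap (𝓞 F) F t) * (γK + c γK) := by
      rw [hbK]
      linear_combination hstK + hcα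
    linear_combination 2 * hstK - he1 - he2
  -- assemble the final statement
  refine ⟨⟨(⟨t, g₂.eval b₀, by rw [mul_comm]; exact hunit, hunit⟩, η₀, m₀),
    ⟨hη₀T, hexist_eq⟩, ?_⟩, ?_⟩
  · rintro ⟨u', η', a'⟩ ⟨hη'T, heq'⟩
    obtain ⟨hd', he'⟩ := hkey (u' : 𝓞 F) η' a' heq'
    obtain ⟨hd, he⟩ := hkey t η₀ m₀ hexist_eq
    have huu : (u' : 𝓞 F) = t :=
      htoFinj (hFKinj (mul_right_cancel₀ hγd (by rw [← hd', ← hd])))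
    have h5 : algebraMap F K (algebraMap (𝓞 F) F (u' : 𝓞 F))
        = algebraMap F K (algebraMap (𝓞 F) F t) := by rw [huu]
    have hsum : η' + ((a' : ℤ) : 𝓞 F) = η₀ + ((m₀ : ℤ) : 𝓞 F) := by
      have h4 : algebraMap F K (algebraMap (𝓞 F) F η') + (a' : K)
          = algebraMap F K (algebraMap (𝓞 F) F η₀) + (m₀ : K) := by
        linear_combination he - he' - (γK - c γK) * h5
      rw [← hcast a', ← hcast m₀, ← map_add, ← map_add, ← map_add, ← map_add] at h4
      exact htoFinj (hFKinj h4)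
    have hηη : η' = η₀ := huniq η' ⟨hη'T, a', by linear_combination hm₀ - hsum⟩
    have haa : a' = m₀ := by
      have h6 : ((a' : ℤ) : 𝓞 F) = ((m₀ : ℤ) : 𝓞 F) := by
        linear_combination hsum - (congrArg (fun w : 𝓞 F => w + ((a' : ℤ) : 𝓞 F)) hηη)
      exact_mod_cast h6
    simp only [Prod.mk.injEq]
    exact ⟨Units.ext huu, hηη, haa⟩
  · intro u' η' a' hηT heq'
    obtain ⟨hd', -⟩ := hkey (u' : 𝓞 F) η' a' heq'
    rw [eq_div_iff hγd]
    exact hd'.symm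
end

section
/- Let K be a CM field of degree 2g with g ≥ 3, maximal totally real subfield F, γ ∈ O_K with O_K = O_F[γ], and δ = (γ - γ̄)(γ̄ - γ) ∈ O_F. If α is a Weil generator for K written as α = (u(γ - γ̄) + η + a)/2 with u ∈ O_F^×, ℤ[η] = O_F, a ∈ ℤ, then there exist integers A, B ∈ ℤ with u²δ + η² = A + Bη, and consequently N_{F/ℚ}(A + Bη - η²) = ±Disc_K / Disc_F², so (A, B) is an integral point on the affine plane curve ∏_{σ: F→ℝ}(x + yσ(η) - σ(η)²) = |Disc_K|/Disc_F². -/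
open NumberField

/-- Power basis attached to a generator of the whole ring. -/
noncomputable def pbOfAdjoinEqTop {R S : Type*} [CommRing R] [CommRing S] [IsDomain R]
    [IsIntegrallyClosed R] [IsDomain S] [Algebra R S] [NoZeroSMulDivisors R S] {x : S}
    (hx : IsIntegral R x) (h : Algebra.adjoin R ({x} : Set S) = ⊤) : PowerBasis R S :=
  (Algebra.adjoin.powerBasis' hx).map ((Subalgebra.equivOfEq _ _ h).trans Subalgebra.topEquiv)

@[simp] theorem pbOfAdjoinEqTop_gen {R S : Type*} [CommRing R] [CommRing S] [IsDomain R]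
    [IsIntegrallyClosed R] [IsDomain S] [Algebra R S] [NoZeroSMulDivisors R S] {x : S}
    (hx : IsIntegral R x) (h : Algebra.adjoin R ({x} : Set S) = ⊤) :
    (pbOfAdjoinEqTop hx h).gen = x := by
  simp [pbOfAdjoinEqTop]

@[simp] theorem pbOfAdjoinEqTop_dim {R S : Type*} [CommRing R] [CommRing S] [IsDomain R]
    [IsIntegrallyClosed R] [IsDomain S] [Algebra R S] [NoZeroSMulDivisors R S] {x : S}
    (hx : IsIntegral R x) (h : Algebra.adjoin R ({x} : Set S) = ⊤) :
    (pbOfAdjoinEqTop hx h).dim = (minpoly R x).natDegree := rfl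

/-- An embedding of `F` extends to `K`. -/
noncomputable def extEmb (F K : Type*) [Field F] [Field K] [NumberField F] [NumberField K]
    [Algebra F K] (σ : F →ₐ[ℚ] ℂ) : K →ₐ[ℚ] ℂ :=
  letI : Algebra F ℂ := σ.toRingHom.toAlgebra
  haveI : IsScalarTower ℚ F ℂ := IsScalarTower.of_algebraMap_eq (fun q => by
    simp [RingHom.algebraMap_toAlgebra])
  haveI : NoZeroSMulDivisors F ℂ :=
    inferInstance
  haveI : Algebra.IsAlgebraic F K := Algebra.IsAlgebraic.of_finite F K
  (IsAlgClosed.lift (R := F) (S := K) (M := ℂ)).restrictScalars ℚ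

theorem extEmb_comm (F K : Type*) [Field F] [Field K] [NumberField F] [NumberField K]
    [Algebra F K] (σ : F →ₐ[ℚ] ℂ) (f : F) : extEmb F K σ (algebraMap F K f) = σ f := by
  letI : Algebra F ℂ := σ.toRingHom.toAlgebra
  haveI : IsScalarTower ℚ F ℂ := IsScalarTower.of_algebraMap_eq (fun q => by
    simp [RingHom.algebraMap_toAlgebra])
  haveI : NoZeroSMulDivisors F ℂ :=
    inferInstance
  haveI : Algebra.IsAlgebraic F K := Algebra.IsAlgebraic.of_finite F K
  have := (IsAlgClosed.lift (R := F) (S := K) (M := ℂ)).commutes f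
  exact this

theorem adjoin_int_top (F : Type*) [Field F] [NumberField F]
    (η : 𝓞 F) (hη : Algebra.adjoin ℤ ({η} : Set (𝓞 F)) = ⊤) :
    IntermediateField.adjoin ℚ {algebraMap (𝓞 F) F η} = ⊤ := by
  apply eq_top_iff.mpr
  intro x _
  revert x
  have hmem : ∀ y : 𝓞 F,
      algebraMap (𝓞 F) F y ∈ IntermediateField.adjoin ℚ {algebraMap (𝓞 F) F η} := by
    intro y
    have hy : y ∈ Algebra.adjoin ℤ ({η} : Set (𝓞 F)) := hη ▸ trivial
    induction hy using Algebra.adjoin_induction with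
    | mem x hx =>
        rcases hx with rfl
        exact IntermediateField.mem_adjoin_simple_self ℚ _
    | algebraMap r =>
        have : algebraMap (𝓞 F) F ((algebraMap ℤ (𝓞 F)) r) = (r : F) := by
          simp [algebraMap_int_eq, map_intCast]
        rw [this]
        exact intCast_mem _ r
    | add x y _ _ hx hy => rw [map_add]; exact add_mem hx hy
    | mul x y _ _ hx hy => rw [map_mul]; exact mul_mem hx hy
  intro x
  obtain ⟨p, q, hq, rfl⟩ := IsFractionRing.div_surjective (A := 𝓞 F) x
  exact fun _ => div_mem (hmem p) (hmem q)

theorem adjoin_rel_top (F K : Type*) [Field F] [Field K] [NumberField F] [NumberField K]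
    [Algebra F K] (γ : 𝓞 K) (hγ : Algebra.adjoin (𝓞 F) ({γ} : Set (𝓞 K)) = ⊤) :
    IntermediateField.adjoin F {algebraMap (𝓞 K) K γ} = ⊤ := by
  apply eq_top_iff.mpr
  intro x _
  revert x
  have hmem : ∀ y : 𝓞 K,
      algebraMap (𝓞 K) K y ∈ IntermediateField.adjoin F {algebraMap (𝓞 K) K γ} := by
    intro y
    have hy : y ∈ Algebra.adjoin (𝓞 F) ({γ} : Set (𝓞 K)) := hγ ▸ trivial
    induction hy using Algebra.adjoin_induction with
    | mem x hx =>
        rcases hx with rfl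
        exact IntermediateField.mem_adjoin_simple_self F _
    | algebraMap r =>
        have : algebraMap (𝓞 K) K ((algebraMap (𝓞 F) (𝓞 K)) r)
            = algebraMap F K (algebraMap (𝓞 F) F r) := by
          rw [← IsScalarTower.algebraMap_apply, IsScalarTower.algebraMap_apply (𝓞 F) F K]
        rw [this]
        exact (IntermediateField.adjoin F {algebraMap (𝓞 K) K γ}).algebraMap_mem _
    | add x y _ _ hx hy => rw [map_add]; exact add_mem hx hy
    | mul x y _ _ hx hy => rw [map_mul]; exact mul_mem hx hy
  intro x
  obtain ⟨p, q, hq, rfl⟩ := IsFractionRing.div_surjective (A := 𝓞 K) x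
  exact fun _ => div_mem (hmem p) (hmem q)
theorem disc_key (g : ℕ)
    (F K : Type*) [Field F] [Field K] [NumberField F] [NumberField K] [Algebra F K]
    (hK : TotallyImaginary K)
    (hgF : Module.finrank ℚ F = g) (h2 : Module.finrank F K = 2)
    (c : K ≃ₐ[F] K)
    (hc : ∀ φ : K →+* ℂ, ∀ x : K, φ (c x) = (starRingEnd ℂ) (φ x))
    (γ : 𝓞 K) (hγ : Algebra.adjoin (𝓞 F) ({γ} : Set (𝓞 K)) = ⊤)
    (δ : 𝓞 F)
    (hδ : algebraMap F K (algebraMap (𝓞 F) F δ) =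
      (algebraMap (𝓞 K) K γ - c (algebraMap (𝓞 K) K γ)) *
        (c (algebraMap (𝓞 K) K γ) - algebraMap (𝓞 K) K γ))
    (η : 𝓞 F) (hη : Algebra.adjoin ℤ ({η} : Set (𝓞 F)) = ⊤) :
    ((NumberField.discr K : ℚ) =
      (-1)^g * (NumberField.discr F : ℚ)^2 * Algebra.norm ℚ (algebraMap (𝓞 F) F δ)) ∧
    0 ≤ Algebra.norm ℚ (algebraMap (𝓞 F) F δ) := by
  classical
  set ηF := algebraMap (𝓞 F) F η with hηF
  set γK := algebraMap (𝓞 K) K γ with hγK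
  set δF := algebraMap (𝓞 F) F δ with hδF
  -- dimensions of minimal polynomials
  have hdimη : (minpoly ℤ η).natDegree = g := by
    have htop := adjoin_int_top F η hη
    have hint : IsIntegral ℤ η := Algebra.IsIntegral.isIntegral η
    have h1 : minpoly ℚ ηF = (minpoly ℤ η).map (algebraMap ℤ ℚ) :=
      minpoly.isIntegrallyClosed_eq_field_fractions ℚ F hint
    have h2' : (minpoly ℚ ηF).natDegree = g := by
      rw [← IntermediateField.adjoin.finrank (IsIntegral.of_finite ℚ _), htop, ← hgF]
      exact (IntermediateField.topEquiv (F := ℚ) (E := F)).toLinearEquiv.finrank_eq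
    rw [h1, Polynomial.natDegree_map_eq_of_injective (algebraMap ℤ ℚ).injective_int] at h2'
    exact h2'
  have hdimγ : (minpoly (𝓞 F) γ).natDegree = 2 := by
    have htop := adjoin_rel_top F K γ hγ
    have hint : IsIntegral (𝓞 F) γ := Algebra.IsIntegral.isIntegral γ
    have h1 : minpoly F γK = (minpoly (𝓞 F) γ).map (algebraMap (𝓞 F) F) :=
      minpoly.isIntegrallyClosed_eq_field_fractions F K hint
    have h3 : (minpoly F γK).natDegree = 2 := by
      rw [← IntermediateField.adjoin.finrank (IsIntegral.of_finite F _), htop, ← h2]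
      exact (IntermediateField.topEquiv (F := F) (E := K)).toLinearEquiv.finrank_eq
    rw [h1, Polynomial.natDegree_map_eq_of_injective
      (FaithfulSMul.algebraMap_injective _ _)] at h3
    exact h3
  -- bases
  let pbF := pbOfAdjoinEqTop (Algebra.IsIntegral.isIntegral η) hη
  haveI : NoZeroSMulDivisors (𝓞 F) (𝓞 K) := ⟨fun {r x} h => by simpa using h⟩
  let pbK := pbOfAdjoinEqTop (Algebra.IsIntegral.isIntegral γ) hγ
  let bF : Module.Basis (Fin g) ℤ (𝓞 F) := pbF.basis.reindex (finCongr (by simp [pbF, hdimη]))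
  let bK2 : Module.Basis (Fin 2) (𝓞 F) (𝓞 K) := pbK.basis.reindex (finCongr (by simp [pbK, hdimγ]))
  let bZ : Module.Basis (Fin g × Fin 2) ℤ (𝓞 K) := bF.smulTower bK2
  have hbF_apply : ∀ s : Fin g, bF s = η ^ (s : ℕ) := by
    intro s
    show (pbF.basis.reindex _) s = η ^ (s : ℕ)
    rw [Module.Basis.reindex_apply, PowerBasis.basis_eq_pow]
    simp [pbF]; rfl
  have hbK2_apply : ∀ j : Fin 2, bK2 j = γ ^ (j : ℕ) := by
    intro j
    show (pbK.basis.reindex _) j = γ ^ (j : ℕ)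
    rw [Module.Basis.reindex_apply, PowerBasis.basis_eq_pow]
    simp [pbK]; rfl
  have hbZ_apply : ∀ p : Fin g × Fin 2,
      algebraMap (𝓞 K) K (bZ p) = algebraMap F K (ηF ^ (p.1 : ℕ)) * γK ^ (p.2 : ℕ) := by
    rintro ⟨s, j⟩
    have hcomm : algebraMap (𝓞 K) K (algebraMap (𝓞 F) (𝓞 K) η) = algebraMap F K ηF := by
      rw [← IsScalarTower.algebraMap_apply, IsScalarTower.algebraMap_apply (𝓞 F) F K]
    rw [show bZ (s, j) = bF s • bK2 j from Module.Basis.smulTower_apply _ _ _, hbF_apply, hbK2_apply,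
      Algebra.smul_def, map_mul, map_pow, map_pow, map_pow, map_pow, hcomm]
  -- embeddings
  have hcardF : Fintype.card (F →ₐ[ℚ] ℂ) = g := by rw [AlgHom.card]; exact hgF
  let σe : Fin g ≃ (F →ₐ[ℚ] ℂ) := (Fintype.equivFinOfCardEq hcardF).symm
  let cQ : K →ₐ[ℚ] K := c.toAlgHom.restrictScalars ℚ
  let ψ : Fin g → Fin 2 → (K →ₐ[ℚ] ℂ) := fun s j =>
    if j = 0 then extEmb F K (σe s) else (extEmb F K (σe s)).comp cQ
  have hres : ∀ (s : Fin g) (j : Fin 2) (f : F), ψ s j (algebraMap F K f) = σe s f := by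
    intro s j f
    by_cases hj : j = 0
    · simp only [ψ, hj, if_pos rfl]
      exact extEmb_comm F K (σe s) f
    · simp only [ψ, if_neg hj, AlgHom.comp_apply]
      have : cQ (algebraMap F K f) = algebraMap F K f := c.commutes f
      rw [this]
      exact extEmb_comm F K (σe s) f
  have hψc : ∀ (s : Fin g) (x : K), ψ s 1 x = ψ s 0 (c x) := by
    intro s x
    simp [ψ, cQ]
  have hψne : ∀ s : Fin g, ψ s 0 ≠ ψ s 1 := by
    intro s h
    obtain ⟨x, hx⟩ := hK (ψ s 0).toRingHom
    apply hx
    have h2 : (ψ s 0).toRingHom (c x) = (starRingEnd ℂ) ((ψ s 0).toRingHom x) :=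
      hc (ψ s 0).toRingHom x
    have h1 : ψ s 0 (c x) = ψ s 0 x := by rw [← hψc, ← h]
    simp only [AlgHom.toRingHom_eq_coe, RingHom.coe_coe] at h2 hx ⊢
    rw [← h2, h1]
  have hinj : Function.Injective (fun p : Fin g × Fin 2 => ψ p.1 p.2) := by
    rintro ⟨s, j⟩ ⟨s', j'⟩ h
    simp only at h
    have hs : s = s' := by
      apply σe.injective
      apply AlgHom.ext
      intro f
      rw [← hres s j f, ← hres s' j' f, h]
    subst hs
    have hjj : j = j' := by
      by_contra hne
      have h01 : ψ s 0 = ψ s 1 := by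
        rcases Fin.exists_fin_two.mp ⟨j, rfl⟩ with _ | _
        · fin_cases j <;> fin_cases j' <;> simp_all
        · fin_cases j <;> fin_cases j' <;> simp_all
      exact hψne s h01
    rw [hjj]
  have hcardK : Fintype.card (K →ₐ[ℚ] ℂ) = g * 2 := by
    rw [AlgHom.card, ← hgF, ← h2]
    exact (Module.finrank_mul_finrank ℚ F K).symm
  have hbij : Function.Bijective (fun p : Fin g × Fin 2 => ψ p.1 p.2) :=
    (Fintype.bijective_iff_injective_and_card _).mpr ⟨hinj, by simp [hcardK]⟩
  let e : (Fin g × Fin 2) ≃ (K →ₐ[ℚ] ℂ) := Equiv.ofBijective _ hbij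
  have he_apply : ∀ p : Fin g × Fin 2, e p = ψ p.1 p.2 := fun _ => rfl
  -- matrices
  let A : Matrix (Fin g) (Fin g) ℂ := Matrix.of fun s s' : Fin g => σe s' ηF ^ (s : ℕ)
  let Cm : Fin g → Matrix (Fin 2) (Fin 2) ℂ :=
    fun s => Matrix.of fun j j' : Fin 2 => ψ s j' γK ^ (j : ℕ)
  let bFQ := Module.Basis.localizationLocalization ℚ (nonZeroDivisors ℤ) F bF
  have hdF : algebraMap ℚ ℂ ((NumberField.discr F : ℚ)) = A.det ^ 2 := by
    have h0 : ((NumberField.discr F : ℤ) : ℚ) = Algebra.discr ℚ ⇑bFQ := by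
      rw [← NumberField.discr_eq_discr F bF]
      exact (Algebra.discr_localizationLocalization ℤ (nonZeroDivisors ℤ) F bF).symm
    rw [h0, Algebra.discr_eq_det_embeddingsMatrixReindex_pow_two ℚ ℂ ⇑bFQ σe]
    have hAe : Algebra.embeddingsMatrixReindex ℚ ℂ ⇑bFQ σe = A := by
      ext s s'
      show (σe s') (bFQ s) = σe s' ηF ^ (s : ℕ)
      rw [show bFQ s = algebraMap (𝓞 F) F (bF s) from
          Module.Basis.localizationLocalization_apply ℚ _ F bF s,
        hbF_apply, map_pow, map_pow]
    rw [hAe]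
  let bZQ := Module.Basis.localizationLocalization ℚ (nonZeroDivisors ℤ) K bZ
  let M := Algebra.embeddingsMatrixReindex ℚ ℂ ⇑bZQ e
  have hdK : algebraMap ℚ ℂ ((NumberField.discr K : ℚ)) = M.det ^ 2 := by
    have h0 : ((NumberField.discr K : ℤ) : ℚ) = Algebra.discr ℚ ⇑bZQ := by
      rw [← NumberField.discr_eq_discr K bZ]
      exact (Algebra.discr_localizationLocalization ℤ (nonZeroDivisors ℤ) K bZ).symm
    rw [h0]
    exact Algebra.discr_eq_det_embeddingsMatrixReindex_pow_two ℚ ℂ ⇑bZQ e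
  have hM : M = Matrix.of (fun p q : Fin g × Fin 2 => A p.1 q.1 * Cm q.1 p.2 q.2) := by
    ext ⟨s, j⟩ ⟨s', j'⟩
    show (e (s', j')) (bZQ (s, j)) = _
    rw [show bZQ (s, j) = algebraMap (𝓞 K) K (bZ (s, j)) from
        Module.Basis.localizationLocalization_apply ℚ _ K bZ (s, j),
      hbZ_apply, he_apply, map_mul, hres s' j' (ηF ^ ((s : ℕ))), map_pow, map_pow]
    rfl
  have hfact : M = (Matrix.blockDiagonal fun _ : Fin 2 => A) *
      ((Matrix.blockDiagonal Cm).submatrix (Equiv.prodComm (Fin g) (Fin 2))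
        (Equiv.prodComm (Fin g) (Fin 2))) := by
    rw [hM]
    ext ⟨s, j⟩ ⟨s', j'⟩
    rw [Matrix.mul_apply, Fintype.sum_prod_type]
    simp [Matrix.blockDiagonal_apply, mul_ite, ite_mul, zero_mul, mul_zero,
      Finset.sum_ite_eq, Finset.sum_ite_eq']
  have hdet : M.det = A.det ^ 2 * ∏ s : Fin g, (ψ s 1 γK - ψ s 0 γK) := by
    rw [hfact, Matrix.det_mul, Matrix.det_submatrix_equiv_self, Matrix.det_blockDiagonal,
      Matrix.det_blockDiagonal]
    congr 1
    · rw [Finset.prod_const, Finset.card_univ, Fintype.card_fin]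
    · apply Finset.prod_congr rfl
      intro s _
      rw [Matrix.det_fin_two]
      show ψ s 0 γK ^ ((0 : Fin 2) : ℕ) * ψ s 1 γK ^ ((1 : Fin 2) : ℕ) -
        ψ s 1 γK ^ ((0 : Fin 2) : ℕ) * ψ s 0 γK ^ ((1 : Fin 2) : ℕ) = _
      simp
  have hsq : ∀ s : Fin g, (ψ s 1 γK - ψ s 0 γK) ^ 2 = -(σe s δF) := by
    intro s
    have h1 : ψ s 1 γK - ψ s 0 γK = ψ s 0 (c γK - γK) := by
      rw [map_sub, hψc]
    have h2 : (c γK - γK) ^ 2 = - algebraMap F K δF := by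
      rw [hδ]; ring
    rw [h1, ← map_pow, h2, map_neg, hres s 0 δF]
  have hprod : ∏ s : Fin g, (ψ s 1 γK - ψ s 0 γK) ^ 2 =
      (-1) ^ g * algebraMap ℚ ℂ (Algebra.norm ℚ δF) := by
    rw [Finset.prod_congr rfl (fun s _ => hsq s)]
    have hneg : (∏ s : Fin g, -(σe s δF)) = (-1) ^ g * ∏ s : Fin g, σe s δF := by
      rw [Finset.prod_congr rfl (fun s _ => (neg_one_mul ((σe s) δF)).symm),
        Finset.prod_mul_distrib, Finset.prod_const, Finset.card_univ, Fintype.card_fin]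
    rw [hneg]
    congr 1
    rw [Algebra.norm_eq_prod_embeddings ℚ ℂ δF]
    exact Equiv.prod_comp σe fun σ => σ δF
  -- positivity
  have hform : ∀ s : Fin g, σe s δF =
      ((Complex.normSq (ψ s 0 γK - ψ s 0 (c γK)) : ℝ) : ℂ) := by
    intro s
    have h0 : σe s δF = ψ s 0 (algebraMap F K δF) := (hres s 0 δF).symm
    rw [h0, hδ, map_mul, map_sub, map_sub]
    have hconj : ψ s 0 (c γK) = (starRingEnd ℂ) (ψ s 0 γK) := by
      have := hc (ψ s 0).toRingHom γK
      simpa using this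
    have hcw : (starRingEnd ℂ) (ψ s 0 γK - ψ s 0 (c γK)) = ψ s 0 (c γK) - ψ s 0 γK := by
      rw [hconj, map_sub, RingHomInvPair.comp_apply_eq]
    rw [← Complex.mul_conj (ψ s 0 γK - ψ s 0 (c γK)), hcw]
  have hpos : 0 ≤ Algebra.norm ℚ δF := by
    have h1 : algebraMap ℚ ℂ (Algebra.norm ℚ δF) =
        ((∏ s : Fin g, Complex.normSq (ψ s 0 γK - ψ s 0 (c γK)) : ℝ) : ℂ) := by
      rw [Algebra.norm_eq_prod_embeddings ℚ ℂ δF, ← Equiv.prod_comp σe fun σ => σ δF,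
        Finset.prod_congr rfl (fun s _ => hform s), Complex.ofReal_prod]
    have h2 : (((Algebra.norm ℚ δF : ℚ) : ℝ) : ℂ) =
        ((∏ s : Fin g, Complex.normSq (ψ s 0 γK - ψ s 0 (c γK)) : ℝ) : ℂ) := by
      rw [Complex.ofReal_ratCast, ← h1]
      exact (eq_ratCast (algebraMap ℚ ℂ) _).symm
    have h3 := Complex.ofReal_inj.mp h2
    have h4 : (0 : ℝ) ≤ ((Algebra.norm ℚ δF : ℚ) : ℝ) := by
      rw [h3]
      exact Finset.prod_nonneg fun s _ => Complex.normSq_nonneg _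
    exact_mod_cast h4
  refine ⟨?_, hpos⟩
  apply (algebraMap ℚ ℂ).injective
  rw [hdK, hdet, mul_pow, ← Finset.prod_pow, hprod, map_mul, map_mul, map_pow, map_pow,
    map_neg, map_one, hdF]
  ring
/-- Let `K` be a CM field of degree `2g` (`g ≥ 3`) with maximal
totally real subfield `F`, complex conjugation `c`, `γ ∈ 𝓞 K` with `𝓞 K = 𝓞 F[γ]`,
and `δ = (γ - γ̄)(γ̄ - γ) ∈ 𝓞 F`.  If `α` is a Weil generator for `K` written as
`α = (u(γ - γ̄) + η + a)/2` with `u ∈ 𝓞 F ˣ`, `ℤ[η] = 𝓞 F`, `a ∈ ℤ`, then there are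
integers `A, B` with `u²δ + η² = A + Bη`, and consequently
`N_{F/ℚ}(A + Bη - η²) = |Disc K| / Disc F²`: the pair `(A, B)` is an integral point
on the affine plane curve `∏_σ (x + yσ(η) - σ(η)²) = |Disc K| / Disc F²`. -/
theorem stmt18 (g : ℕ) (hg : 3 ≤ g)
    (F K : Type*) [Field F] [Field K] [NumberField F] [NumberField K] [Algebra F K]
    (hF : TotallyReal F) (hK : TotallyImaginary K)
    (hgF : Module.finrank ℚ F = g) (h2 : Module.finrank F K = 2)
    (c : K ≃ₐ[F] K)
    (hc : ∀ φ : K →+* ℂ, ∀ x : K, φ (c x) = (starRingEnd ℂ) (φ x))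
    (γ : 𝓞 K) (hγ : Algebra.adjoin (𝓞 F) ({γ} : Set (𝓞 K)) = ⊤)
    (δ : 𝓞 F)
    (hδ : algebraMap F K (algebraMap (𝓞 F) F δ) =
      (algebraMap (𝓞 K) K γ - c (algebraMap (𝓞 K) K γ)) *
        (c (algebraMap (𝓞 K) K γ) - algebraMap (𝓞 K) K γ))
    (α : K) (hW : IsWeilGenerator K c.toRingEquiv α)
    (u : (𝓞 F)ˣ) (η : 𝓞 F) (hη : Algebra.adjoin ℤ ({η} : Set (𝓞 F)) = ⊤) (a : ℤ)
    (hrep : α = (algebraMap F K (algebraMap (𝓞 F) F (u : 𝓞 F)) *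
          (algebraMap (𝓞 K) K γ - c (algebraMap (𝓞 K) K γ)) +
        algebraMap F K (algebraMap (𝓞 F) F η) + (a : K)) / 2) :
    ∃ A B : ℤ,
      (algebraMap (𝓞 F) F (u : 𝓞 F)) ^ 2 * algebraMap (𝓞 F) F δ +
          (algebraMap (𝓞 F) F η) ^ 2 =
        (A : F) + (B : F) * algebraMap (𝓞 F) F η ∧
      Algebra.norm ℚ ((A : F) + (B : F) * algebraMap (𝓞 F) F η -
          (algebraMap (𝓞 F) F η) ^ 2) =
        |(NumberField.discr K : ℚ)| / (NumberField.discr F : ℚ) ^ 2 := by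
  classical
  obtain ⟨hαint, ⟨n, hn⟩, hadj⟩ := hW
  have hn' : α * c α = (n : K) := hn
  have hc2 : ∀ x : K, c (c x) = x := by
    have hne : Nonempty (K →+* ℂ) := by
      have h := NumberField.Embeddings.card K ℂ
      have hpos : 0 < Fintype.card (K →+* ℂ) := by rw [h]; exact Module.finrank_pos
      exact Fintype.card_pos_iff.mp hpos
    obtain ⟨φ⟩ := hne
    intro x
    apply RingHom.injective φ
    rw [hc φ, hc φ, RingHomInvPair.comp_apply_eq]
  set uF := algebraMap (𝓞 F) F (u : 𝓞 F) with huF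
  set ηF := algebraMap (𝓞 F) F η with hηF
  set γK := algebraMap (𝓞 K) K γ with hγK
  set δF := algebraMap (𝓞 F) F δ with hδF
  have h2α : 2 * α = algebraMap F K uF * (γK - c γK) + algebraMap F K ηF + (a : K) := by
    rw [hrep]; ring
  have hcα : 2 * c α = algebraMap F K uF * (c γK - γK) + algebraMap F K ηF + (a : K) := by
    have := congrArg c h2α
    simpa [map_mul, map_add, map_sub, map_ofNat, AlgEquiv.commutes, hc2] using this
  have h1 : uF ^ 2 * δF + ηF ^ 2 = ((4*n - a^2 : ℤ) : F) + ((-(2*a) : ℤ) : F) * ηF := by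
    apply (algebraMap F K).injective
    have h4 : (2 * α) * (2 * c α) = (4 : K) * n := by
      have h5 : (2 * α) * (2 * c α) = 4 * (α * c α) := by ring
      rw [h5, hn']
    rw [h2α, hcα] at h4
    rw [map_add, map_mul, map_pow, map_add, map_mul, map_intCast, map_intCast, hδ]
    push_cast
    linear_combination h4
  refine ⟨4*n - a^2, -(2*a), h1, ?_⟩
  have hval : ((4*n - a^2 : ℤ) : F) + ((-(2*a) : ℤ) : F) * ηF - ηF ^ 2 = uF ^ 2 * δF := by
    linear_combination -h1
  rw [hval]
  obtain ⟨heq, hpos⟩ := disc_key g F K hK hgF h2 c hc γ hγ δ hδ η hη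
  have hu : (Algebra.norm ℚ uF) ^ 2 = 1 := by
    have h := (NumberField.isUnit_iff_norm (K := F)).mp u.isUnit
    have hr : ((RingOfIntegers.norm ℚ (u : 𝓞 F) : ℚ)) = Algebra.norm ℚ uF := rfl
    rw [hr] at h
    calc (Algebra.norm ℚ uF) ^ 2 = |Algebra.norm ℚ uF| ^ 2 := (sq_abs _).symm
    _ = 1 := by rw [h, one_pow]
  have hFne : ((NumberField.discr F : ℚ)) ≠ 0 :=
    Int.cast_ne_zero.mpr (NumberField.discr_ne_zero F)
  have habs : |(NumberField.discr K : ℚ)| =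
      (NumberField.discr F : ℚ) ^ 2 * Algebra.norm ℚ δF := by
    rw [heq, abs_mul, abs_mul, abs_pow, abs_pow, abs_neg, abs_one, one_pow, one_mul,
      sq_abs, abs_of_nonneg hpos]
  rw [map_mul, map_pow, hu, one_mul, habs, mul_comm, mul_div_assoc,
    div_self (pow_ne_zero 2 hFne), mul_one]
end
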